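/- Let p, q : ℝ → ℂ be twice continuously differentiable and periodic with period Ω > 0, with q(x̄) ≠ 0 for some x̄ ∈ ℝ. For E₀ ∈ ℂ let s(E₀) denote the order of the zero of the entire function E ↦ Δ(E)² − 4 at E₀, and for x ∈ ℝ let δ(E₀, x) denote the order of the zero of the entire function E ↦ g(E,x) at E₀ (valued in ℕ ∪ {∞}); set δ_i(E₀) = inf_{x ∈ ℝ} δ(E₀, x). Then s(E₀) − 2 δ_i(E₀) ≥ 0 for every E₀ ∈ ℂ; i.e., the order of vanishing of Δ² − 4 at any point is at least twice the minimal algebraic multiplicity of that point as a Dirichlet eigenvalue over all base points x. -/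

import Mathlib

open Complex

noncomputable section

/-- `akPolyR n f E x = ∑_{ℓ=0}^{n} f_{n-ℓ}(x) E^ℓ` for coefficient functions on `ℝ`. -/
def akPolyR (n : ℕ) (f : ℕ → ℝ → ℂ) (E : ℂ) (x : ℝ) : ℂ :=
  ∑ ℓ ∈ Finset.range (n + 1), f (n - ℓ) x * E ^ ℓ

/-- `(ψ₁, ψ₂)` is a solution of the AKNS system `JΨ' + QΨ = EΨ` on `ℝ`:
`i ψ₁' - i q ψ₂ = E ψ₁` and `-i ψ₂' + i p ψ₁ = E ψ₂`. -/
def SolvesAKNSR (p q : ℝ → ℂ) (E : ℂ) (ψ₁ ψ₂ : ℝ → ℂ) : Prop :=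
  ∀ x : ℝ,
    DifferentiableAt ℝ ψ₁ x ∧ DifferentiableAt ℝ ψ₂ x ∧
    I * deriv ψ₁ x - I * q x * ψ₂ x = E * ψ₁ x ∧
    -I * deriv ψ₂ x + I * p x * ψ₁ x = E * ψ₂ x

/-- `Φ E · x₀` is the fundamental matrix of the AKNS system with potentials `(p,q)` and
spectral parameter `E`, normalized by `Φ E x₀ x₀ = 1`. -/
def IsFundamentalMatrix (p q : ℝ → ℂ) (Φ : ℂ → ℝ → ℝ → Matrix (Fin 2) (Fin 2) ℂ) : Prop :=
  ∀ (E : ℂ) (x₀ : ℝ),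
    (∀ j, SolvesAKNSR p q E (fun x => Φ E x x₀ 0 j) (fun x => Φ E x x₀ 1 j)) ∧
    Φ E x₀ x₀ = 1

set_option maxHeartbeats 1000000

namespace AKNS15

open Set Topology Filter


lemma gronwallBound_le_aux {δ K ε T : ℝ} (hδ : 0 ≤ δ) (hK : 0 ≤ K) (hε : 0 ≤ ε) (hT : 0 ≤ T) :
    gronwallBound δ K ε T ≤ (δ + ε * T) * Real.exp (K * T) := by
  rcases eq_or_lt_of_le hK with hK0 | hKpos
  · rw [← hK0, gronwallBound_K0]
    have h1 : (1:ℝ) ≤ Real.exp (0 * T) := by simp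
    dsimp only
    nlinarith [mul_nonneg hε hT]
  · rw [gronwallBound_of_K_ne_0 hKpos.ne']
    have h1 : Real.exp (K * T) - 1 ≤ K * T * Real.exp (K * T) := by
      have h2 := Real.add_one_le_exp (-(K * T))
      have h3 : Real.exp (-(K*T)) * Real.exp (K*T) = 1 := by
        rw [← Real.exp_add]; simp
      nlinarith [Real.exp_pos (K * T)]
    have h4 : ε / K * (Real.exp (K * T) - 1) ≤ ε * T * Real.exp (K * T) := by
      rw [div_mul_eq_mul_div, div_le_iff₀ hKpos]
      calc ε * (Real.exp (K*T) - 1) ≤ ε * (K * T * Real.exp (K*T)) := by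
            apply mul_le_mul_of_nonneg_left h1 hε
        _ = ε * T * Real.exp (K*T) * K := by ring
    nlinarith [Real.exp_pos (K*T)]

variable {W : Type*} [NormedAddCommGroup W] [NormedSpace ℝ W]

/-- One-sided (forward) Grönwall estimate on `[x₀, x₀+T]`. -/
lemma gronwall_forward (f f' : ℝ → W) (hf : ∀ t, HasDerivAt f (f' t) t)
    (x₀ T K ε δ : ℝ) (hδ : ‖f x₀‖ ≤ δ)
    (hb : ∀ t ∈ Icc x₀ (x₀ + T), ‖f' t‖ ≤ K * ‖f t‖ + ε) :
    ∀ t ∈ Icc x₀ (x₀ + T), ‖f t‖ ≤ gronwallBound δ K ε (t - x₀) := by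
  apply norm_le_gronwallBound_of_norm_deriv_right_le
  · exact fun t _ => (hf t).continuousAt.continuousWithinAt
  · exact fun t _ => (hf t).hasDerivWithinAt
  · exact hδ
  · exact fun t ht => hb t ⟨ht.1, ht.2.le⟩

lemma gronwallBound_mono_time {δ K ε : ℝ} (hδ : 0 ≤ δ) (hK : 0 ≤ K) (hε : 0 ≤ ε)
    {s t : ℝ} (hs : 0 ≤ s) (hst : s ≤ t) : gronwallBound δ K ε s ≤ gronwallBound δ K ε t := by
  rcases eq_or_lt_of_le hK with hK0 | hKpos
  · rw [← hK0, gronwallBound_K0]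
    dsimp only
    nlinarith
  · rw [gronwallBound_of_K_ne_0 hKpos.ne']
    dsimp only
    have h1 : Real.exp (K * s) ≤ Real.exp (K * t) := by
      apply Real.exp_le_exp.2; nlinarith
    have h2 : 0 ≤ ε / K := div_nonneg hε hK
    nlinarith

/-- Two-sided Grönwall estimate on `[x₀-T, x₀+T]`. -/
lemma gronwall_two_sided (f f' : ℝ → W) (hf : ∀ t, HasDerivAt f (f' t) t)
    (x₀ T K ε δ : ℝ) (hK : 0 ≤ K) (hε : 0 ≤ ε) (hδ : ‖f x₀‖ ≤ δ)
    (hb : ∀ t ∈ Icc (x₀ - T) (x₀ + T), ‖f' t‖ ≤ K * ‖f t‖ + ε) :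
    ∀ t ∈ Icc (x₀ - T) (x₀ + T), ‖f t‖ ≤ gronwallBound δ K ε T := by
  intro t ht
  have hδ0 : 0 ≤ δ := le_trans (norm_nonneg _) hδ
  have hTnn : 0 ≤ T := by
    by_contra h
    push_neg at h
    have := ht.1.trans ht.2
    linarith
  rcases le_or_gt x₀ t with hcase | hcase
  · have h1 := gronwall_forward f f' hf x₀ T K ε δ hδ
      (fun s hs => hb s ⟨by linarith [hs.1], hs.2⟩) t ⟨hcase, ht.2⟩
    exact h1.trans (gronwallBound_mono_time hδ0 hK hε (by linarith) (by linarith [ht.2]))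
  · -- reflect
    set g : ℝ → W := fun s => f (2 * x₀ - s) with hg
    have hg' : ∀ s, HasDerivAt g ((-1 : ℝ) • f' (2 * x₀ - s)) s := by
      intro s
      have h2 : HasDerivAt (fun s : ℝ => 2 * x₀ - s) (-1) s := by
        exact ((hasDerivAt_const s (2*x₀)).sub (hasDerivAt_id s)).congr_deriv (by norm_num)
      exact (hf (2 * x₀ - s)).scomp s h2
    have h1 := gronwall_forward g (fun s => (-1 : ℝ) • f' (2 * x₀ - s)) hg' x₀ T K ε δ
      (by
        have h5 : 2 * x₀ - x₀ = x₀ := by ring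
        simpa [hg, h5] using hδ)
      (fun s hs => by
        have : 2 * x₀ - s ∈ Icc (x₀ - T) (x₀ + T) := ⟨by linarith [hs.2], by linarith [hs.1]⟩
        simpa [hg] using hb (2*x₀ - s) this)
      (2 * x₀ - t) ⟨by linarith, by linarith [ht.1]⟩
    have h2 : g (2 * x₀ - t) = f t := by
      have h5 : 2 * x₀ - (2 * x₀ - t) = t := by ring
      simp [hg, h5]
    rw [h2] at h1
    exact h1.trans (gronwallBound_mono_time hδ0 hK hε (by linarith) (by linarith [ht.1]))

/-- Uniqueness: a solution of a linear ODE bound vanishing at one point vanishes everywhere. -/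
lemma ode_zero (f f' : ℝ → W) (hf : ∀ t, HasDerivAt f (f' t) t)
    (g : ℝ → ℝ) (hg : Continuous g) (hb : ∀ t, ‖f' t‖ ≤ g t * ‖f t‖)
    (x₀ : ℝ) (h0 : f x₀ = 0) : ∀ t, f t = 0 := by
  intro t
  set T : ℝ := |t - x₀| with hT
  have hTnn : 0 ≤ T := abs_nonneg _
  obtain ⟨C, hC⟩ := (isCompact_Icc (a := x₀ - T) (b := x₀ + T)).exists_bound_of_continuousOn
    hg.continuousOn
  set K : ℝ := max C 0 with hK
  have hKnn : 0 ≤ K := le_max_right _ _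
  have hb' : ∀ s ∈ Icc (x₀ - T) (x₀ + T), ‖f' s‖ ≤ K * ‖f s‖ + 0 := by
    intro s hs
    have h1 : g s ≤ K := le_trans (le_trans (le_abs_self _) (hC s hs)) (le_max_left _ _)
    have := hb s
    have h2 : g s * ‖f s‖ ≤ K * ‖f s‖ := mul_le_mul_of_nonneg_right h1 (norm_nonneg _)
    linarith
  have h3 := gronwall_two_sided f f' hf x₀ T K 0 0 hKnn le_rfl (by simp [h0])
    hb' t ⟨by rw [hT]; cases abs_cases (t - x₀) <;> linarith [abs_nonneg (t-x₀)],
           by rw [hT]; cases abs_cases (t - x₀) <;> linarith [abs_nonneg (t-x₀)]⟩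
  rw [gronwallBound_ε0_δ0] at h3
  exact norm_le_zero_iff.mp h3




lemma fstD {F : ℝ → ℂ × ℂ} {d : ℂ × ℂ} {x : ℝ} (h : HasDerivAt F d x) :
    HasDerivAt (fun x => (F x).1) d.1 x := by
  exact (ContinuousLinearMap.fst ℝ ℂ ℂ).hasFDerivAt.comp_hasDerivAt x h

lemma sndD {F : ℝ → ℂ × ℂ} {d : ℂ × ℂ} {x : ℝ} (h : HasDerivAt F d x) :
    HasDerivAt (fun x => (F x).2) d.2 x := by
  exact (ContinuousLinearMap.snd ℝ ℂ ℂ).hasFDerivAt.comp_hasDerivAt x h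

lemma pair_norm_le {z w : ℂ} {r : ℝ} (hz : ‖z‖ ≤ r) (hw : ‖w‖ ≤ r) :
    ‖((z, w) : ℂ × ℂ)‖ ≤ r := by
  rw [Prod.norm_def]
  exact max_le hz hw

lemma pair_lin_bound (α β γ δ u v : ℂ) :
    ‖((α*u + β*v, γ*u + δ*v) : ℂ × ℂ)‖ ≤ (‖α‖ + ‖β‖ + ‖γ‖ + ‖δ‖) * ‖((u,v) : ℂ × ℂ)‖ := by
  have hu : ‖u‖ ≤ ‖((u,v) : ℂ × ℂ)‖ := norm_fst_le (⟨u, v⟩ : ℂ × ℂ)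
  have hv : ‖v‖ ≤ ‖((u,v) : ℂ × ℂ)‖ := norm_snd_le (⟨u, v⟩ : ℂ × ℂ)
  have hN : 0 ≤ ‖((u,v) : ℂ × ℂ)‖ := norm_nonneg _
  apply pair_norm_le
  · calc ‖α*u + β*v‖ ≤ ‖α*u‖ + ‖β*v‖ := norm_add_le _ _
      _ = ‖α‖*‖u‖ + ‖β‖*‖v‖ := by rw [norm_mul, norm_mul]
      _ ≤ ‖α‖*‖((u,v) : ℂ × ℂ)‖ + ‖β‖*‖((u,v) : ℂ × ℂ)‖ :=
          add_le_add (mul_le_mul_of_nonneg_left hu (norm_nonneg _))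
            (mul_le_mul_of_nonneg_left hv (norm_nonneg _))
      _ ≤ (‖α‖ + ‖β‖ + ‖γ‖ + ‖δ‖) * ‖((u,v) : ℂ × ℂ)‖ := by nlinarith [norm_nonneg γ, norm_nonneg δ]
  · calc ‖γ*u + δ*v‖ ≤ ‖γ*u‖ + ‖δ*v‖ := norm_add_le _ _
      _ = ‖γ‖*‖u‖ + ‖δ‖*‖v‖ := by rw [norm_mul, norm_mul]
      _ ≤ ‖γ‖*‖((u,v) : ℂ × ℂ)‖ + ‖δ‖*‖((u,v) : ℂ × ℂ)‖ :=
          add_le_add (mul_le_mul_of_nonneg_left hu (norm_nonneg _))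
            (mul_le_mul_of_nonneg_left hv (norm_nonneg _))
      _ ≤ (‖α‖ + ‖β‖ + ‖γ‖ + ‖δ‖) * ‖((u,v) : ℂ × ℂ)‖ := by nlinarith [norm_nonneg α, norm_nonneg β]

section AKNS

variable {p q : ℝ → ℂ} {Φ : ℂ → ℝ → ℝ → Matrix (Fin 2) (Fin 2) ℂ}
  (hΦ : IsFundamentalMatrix p q Φ)

include hΦ

lemma hasDerivAt_phi0 (E : ℂ) (x₀ : ℝ) (j : Fin 2) (x : ℝ) :
    HasDerivAt (fun y => Φ E y x₀ 0 j) (q x * Φ E x x₀ 1 j - I*E*Φ E x x₀ 0 j) x := by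
  obtain ⟨h1, h2, e1, e2⟩ := (hΦ E x₀).1 j x
  have hd : deriv (fun y => Φ E y x₀ 0 j) x = q x * Φ E x x₀ 1 j - I*E*Φ E x x₀ 0 j := by
    linear_combination (-I) * e1 +
      (deriv (fun y => Φ E y x₀ 0 j) x - q x * Φ E x x₀ 1 j) * Complex.I_mul_I
  exact hd ▸ h1.hasDerivAt

lemma hasDerivAt_phi1 (E : ℂ) (x₀ : ℝ) (j : Fin 2) (x : ℝ) :
    HasDerivAt (fun y => Φ E y x₀ 1 j) (p x * Φ E x x₀ 0 j + I*E*Φ E x x₀ 1 j) x := by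
  obtain ⟨h1, h2, e1, e2⟩ := (hΦ E x₀).1 j x
  have hd : deriv (fun y => Φ E y x₀ 1 j) x = p x * Φ E x x₀ 0 j + I*E*Φ E x x₀ 1 j := by
    linear_combination I * e2 +
      (deriv (fun y => Φ E y x₀ 1 j) x - p x * Φ E x x₀ 0 j) * Complex.I_mul_I
  exact hd ▸ h2.hasDerivAt

omit hΦ

/-- `F : ℝ → ℂ × ℂ` solves the first-order AKNS system with spectral parameter `E`. -/
def IsSol (p q : ℝ → ℂ) (E : ℂ) (F : ℝ → ℂ × ℂ) : Prop :=
  ∀ y, HasDerivAt F (q y * (F y).2 - I*E*(F y).1, p y * (F y).1 + I*E*(F y).2) y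

include hΦ

lemma isSol_col (E : ℂ) (x₀ : ℝ) (j : Fin 2) :
    IsSol p q E (fun y => (Φ E y x₀ 0 j, Φ E y x₀ 1 j)) := fun y =>
  (hasDerivAt_phi0 hΦ E x₀ j y).prodMk (hasDerivAt_phi1 hΦ E x₀ j y)

omit hΦ

lemma isSol_comb {E : ℂ} {F G : ℝ → ℂ × ℂ} (hF : IsSol p q E F) (hG : IsSol p q E G)
    (c d : ℂ) : IsSol p q E (fun y => (c * (F y).1 + d * (G y).1, c * (F y).2 + d * (G y).2)) := by
  intro y
  have h := ((((fstD (hF y)).const_mul c).add ((fstD (hG y)).const_mul d)).prodMk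
    (((sndD (hF y)).const_mul c).add ((sndD (hG y)).const_mul d)))
  refine h.congr_deriv ?_
  simp only [Prod.mk.injEq]
  constructor <;> ring

lemma isSol_sub {E : ℂ} {F G : ℝ → ℂ × ℂ} (hF : IsSol p q E F) (hG : IsSol p q E G) :
    IsSol p q E (fun y => F y - G y) := by
  intro y
  have h := (hF y).sub (hG y)
  refine h.congr_deriv ?_
  simp only [Prod.fst_sub, Prod.snd_sub, Prod.mk_sub_mk, Prod.mk.injEq]
  constructor <;> ring

/-- Uniqueness of solutions of the AKNS system. -/
lemma isSol_unique (hp : Continuous p) (hq : Continuous q) {E : ℂ} {F G : ℝ → ℂ × ℂ}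
    (hF : IsSol p q E F) (hG : IsSol p q E G) (x : ℝ) (hx : F x = G x) : ∀ y, F y = G y := by
  have hZ := isSol_sub hF hG
  have h0 : (fun y => F y - G y) x = 0 := by simp [hx]
  have key := ode_zero (fun y => F y - G y) _ hZ
    (fun y => ‖q y‖ + ‖p y‖ + 2 * ‖E‖)
    (by continuity)
    (fun y => by
      have h := pair_lin_bound (q y) (-(I*E)) (I*E) (p y)
        ((F y - G y).2) ((F y - G y).1)
      have he : ‖-(I*E)‖ = ‖E‖ := by simp
      have he2 : ‖I*E‖ = ‖E‖ := by simp
      have hsw : ‖(((F y - G y).2, (F y - G y).1) : ℂ × ℂ)‖ = ‖F y - G y‖ := by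
        rw [Prod.norm_def, Prod.norm_def]
        exact max_comm _ _
      calc ‖(q y * (F y - G y).2 - I*E*(F y - G y).1,
              p y * (F y - G y).1 + I*E*(F y - G y).2)‖
          = ‖((q y * (F y - G y).2 + (-(I*E)) * (F y - G y).1,
              (I*E) * (F y - G y).2 + p y * (F y - G y).1) : ℂ × ℂ)‖ := by
            congr 1
            simp only [Prod.mk.injEq]
            constructor <;> ring
        _ ≤ (‖q y‖ + ‖-(I*E)‖ + ‖I*E‖ + ‖p y‖) * ‖(((F y - G y).2, (F y - G y).1) : ℂ × ℂ)‖ :=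
            pair_lin_bound _ _ _ _ _ _
        _ = (‖q y‖ + ‖p y‖ + 2 * ‖E‖) * ‖F y - G y‖ := by
            rw [hsw]
            simp only [he, he2]
            ring_nf
      ) x h0
  intro y
  have := key y
  exact sub_eq_zero.mp this

end AKNS
section AKNS2

variable {p q : ℝ → ℂ} {Φ : ℂ → ℝ → ℝ → Matrix (Fin 2) (Fin 2) ℂ}
  (hp : Continuous p) (hq : Continuous q)
  (hΦ : IsFundamentalMatrix p q Φ)
  {Ω : ℝ} (hpper : ∀ x, p (x + Ω) = p x) (hqper : ∀ x, q (x + Ω) = q x)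

include hΦ hp hq

/-- The Wronskian of the fundamental matrix is constant `= 1`. -/
lemma det_phi (E : ℂ) (x₀ y : ℝ) :
    Φ E y x₀ 0 0 * Φ E y x₀ 1 1 - Φ E y x₀ 0 1 * Φ E y x₀ 1 0 = 1 := by
  set W : ℝ → ℂ × ℂ := fun y =>
    (Φ E y x₀ 0 0 * Φ E y x₀ 1 1 - Φ E y x₀ 0 1 * Φ E y x₀ 1 0 - 1, (0:ℂ)) with hW
  have hder : ∀ y, HasDerivAt W ((0:ℂ), (0:ℂ)) y := by
    intro y
    have h := ((((hasDerivAt_phi0 hΦ E x₀ 0 y).mul (hasDerivAt_phi1 hΦ E x₀ 1 y)).sub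
      ((hasDerivAt_phi0 hΦ E x₀ 1 y).mul (hasDerivAt_phi1 hΦ E x₀ 0 y))).sub_const 1).prodMk
      (hasDerivAt_const y (0:ℂ))
    refine h.congr_deriv ?_
    simp only [Prod.mk.injEq]
    refine ⟨by ring, by trivial⟩
  have h0 : W x₀ = 0 := by
    have h1 := (hΦ E x₀).2
    simp only [hW, h1, Matrix.one_apply]
    norm_num [Prod.ext_iff]
  have key := ode_zero W (fun _ => ((0:ℂ),(0:ℂ))) hder (fun _ => 0) continuous_const
    (fun t => by simp [Prod.norm_def]) x₀ h0
  have := key y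
  have h2 : (W y).1 = 0 := by rw [this]; rfl
  simp only [hW] at h2
  linear_combination h2

/-- Semigroup property. -/
lemma phi_semigroup (E : ℂ) (x y : ℝ) (i j : Fin 2) :
    Φ E y 0 i j = Φ E y x i 0 * Φ E x 0 0 j + Φ E y x i 1 * Φ E x 0 1 j := by
  set c : ℂ := Φ E x 0 0 j with hc
  set d : ℂ := Φ E x 0 1 j with hd
  have hF := isSol_comb (isSol_col hΦ E x 0) (isSol_col hΦ E x 1) c d
  have hG := isSol_col hΦ E 0 j
  have hx : (fun y => (c * Φ E y x 0 0 + d * Φ E y x 0 1, c * Φ E y x 1 0 + d * Φ E y x 1 1)) x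
      = (fun y => (Φ E y 0 0 j, Φ E y 0 1 j)) x := by
    have h1 := (hΦ E x).2
    simp only [h1, Matrix.one_apply]
    norm_num [Prod.ext_iff, hc, hd]
  have key := isSol_unique hp hq hF hG x hx y
  have h1 : c * Φ E y x 0 0 + d * Φ E y x 0 1 = Φ E y 0 0 j := congrArg Prod.fst key
  have h2 : c * Φ E y x 1 0 + d * Φ E y x 1 1 = Φ E y 0 1 j := congrArg Prod.snd key
  have e0 : Φ E y 0 0 j = Φ E y x 0 0 * c + Φ E y x 0 1 * d := by rw [← h1]; ring
  have e1 : Φ E y 0 1 j = Φ E y x 1 0 * c + Φ E y x 1 1 * d := by rw [← h2]; ring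
  fin_cases i
  · exact e0
  · exact e1

/-- Monodromy entry representations via base-0 solutions. -/
lemma m_rep0 (E : ℂ) (x : ℝ) (i : Fin 2) :
    Φ E (x+Ω) x i 0 = Φ E (x+Ω) 0 i 0 * Φ E x 0 1 1 - Φ E (x+Ω) 0 i 1 * Φ E x 0 1 0 := by
  have hdet := det_phi hp hq hΦ E 0 x
  have s0 := phi_semigroup hp hq hΦ E x (x+Ω) i 0
  have s1 := phi_semigroup hp hq hΦ E x (x+Ω) i 1
  linear_combination (-(Φ E x 0 1 1)) * s0 + (Φ E x 0 1 0) * s1 - (Φ E (x+Ω) x i 0) * hdet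

lemma m_rep1 (E : ℂ) (x : ℝ) (i : Fin 2) :
    Φ E (x+Ω) x i 1 = Φ E (x+Ω) 0 i 1 * Φ E x 0 0 0 - Φ E (x+Ω) 0 i 0 * Φ E x 0 0 1 := by
  have hdet := det_phi hp hq hΦ E 0 x
  have s0 := phi_semigroup hp hq hΦ E x (x+Ω) i 0
  have s1 := phi_semigroup hp hq hΦ E x (x+Ω) i 1
  linear_combination (-(Φ E x 0 0 0)) * s1 + (Φ E x 0 0 1) * s0 - (Φ E (x+Ω) x i 1) * hdet

include hqper in
lemma hasDerivAt_phi0_shift (E : ℂ) (j : Fin 2) (x : ℝ) :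
    HasDerivAt (fun x => Φ E (x+Ω) 0 0 j)
      (q x * Φ E (x+Ω) 0 1 j - I*E*Φ E (x+Ω) 0 0 j) x := by
  have h := (hasDerivAt_phi0 hΦ E 0 j (x+Ω)).comp_add_const x Ω
  simpa [hqper x] using h

include hpper in
lemma hasDerivAt_phi1_shift (E : ℂ) (j : Fin 2) (x : ℝ) :
    HasDerivAt (fun x => Φ E (x+Ω) 0 1 j)
      (p x * Φ E (x+Ω) 0 0 j + I*E*Φ E (x+Ω) 0 1 j) x := by
  have h := (hasDerivAt_phi1 hΦ E 0 j (x+Ω)).comp_add_const x Ω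
  simpa [hpper x] using h

include hp hq hpper hqper

lemma hasDerivAt_mg (E : ℂ) (x : ℝ) :
    HasDerivAt (fun x => Φ E (x+Ω) x 0 1)
      (q x * (Φ E (x+Ω) x 1 1 - Φ E (x+Ω) x 0 0) - 2*I*E*Φ E (x+Ω) x 0 1) x := by
  have hfun : (fun x => Φ E (x+Ω) x 0 1)
      = fun x => Φ E (x+Ω) 0 0 1 * Φ E x 0 0 0 - Φ E (x+Ω) 0 0 0 * Φ E x 0 0 1 :=
    funext fun x => m_rep1 hp hq hΦ E x 0
  rw [hfun]
  have h := ((hasDerivAt_phi0_shift hp hq hΦ hqper E 1 x).mul (hasDerivAt_phi0 hΦ E 0 0 x)).sub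
    ((hasDerivAt_phi0_shift hp hq hΦ hqper E 0 x).mul (hasDerivAt_phi0 hΦ E 0 1 x))
  refine h.congr_deriv ?_
  rw [m_rep1 hp hq hΦ E x 1, m_rep1 hp hq hΦ E x 0, m_rep0 hp hq hΦ E x 0]
  ring

lemma hasDerivAt_ma (E : ℂ) (x : ℝ) :
    HasDerivAt (fun x => Φ E (x+Ω) x 0 0)
      (q x * Φ E (x+Ω) x 1 0 - p x * Φ E (x+Ω) x 0 1) x := by
  have hfun : (fun x => Φ E (x+Ω) x 0 0)
      = fun x => Φ E (x+Ω) 0 0 0 * Φ E x 0 1 1 - Φ E (x+Ω) 0 0 1 * Φ E x 0 1 0 :=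
    funext fun x => m_rep0 hp hq hΦ E x 0
  rw [hfun]
  have h := ((hasDerivAt_phi0_shift hp hq hΦ hqper E 0 x).mul (hasDerivAt_phi1 hΦ E 0 1 x)).sub
    ((hasDerivAt_phi0_shift hp hq hΦ hqper E 1 x).mul (hasDerivAt_phi1 hΦ E 0 0 x))
  refine h.congr_deriv ?_
  rw [m_rep0 hp hq hΦ E x 1, m_rep1 hp hq hΦ E x 0]
  ring

lemma hasDerivAt_mh (E : ℂ) (x : ℝ) :
    HasDerivAt (fun x => Φ E (x+Ω) x 1 0)
      (p x * (Φ E (x+Ω) x 0 0 - Φ E (x+Ω) x 1 1) + 2*I*E*Φ E (x+Ω) x 1 0) x := by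
  have hfun : (fun x => Φ E (x+Ω) x 1 0)
      = fun x => Φ E (x+Ω) 0 1 0 * Φ E x 0 1 1 - Φ E (x+Ω) 0 1 1 * Φ E x 0 1 0 :=
    funext fun x => m_rep0 hp hq hΦ E x 1
  rw [hfun]
  have h := ((hasDerivAt_phi1_shift hp hq hΦ hpper E 0 x).mul (hasDerivAt_phi1 hΦ E 0 1 x)).sub
    ((hasDerivAt_phi1_shift hp hq hΦ hpper E 1 x).mul (hasDerivAt_phi1 hΦ E 0 0 x))
  refine h.congr_deriv ?_
  rw [m_rep0 hp hq hΦ E x 0, m_rep1 hp hq hΦ E x 1, m_rep0 hp hq hΦ E x 1]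
  ring

lemma hasDerivAt_md (E : ℂ) (x : ℝ) :
    HasDerivAt (fun x => Φ E (x+Ω) x 1 1)
      (p x * Φ E (x+Ω) x 0 1 - q x * Φ E (x+Ω) x 1 0) x := by
  have hfun : (fun x => Φ E (x+Ω) x 1 1)
      = fun x => Φ E (x+Ω) 0 1 1 * Φ E x 0 0 0 - Φ E (x+Ω) 0 1 0 * Φ E x 0 0 1 :=
    funext fun x => m_rep1 hp hq hΦ E x 1
  rw [hfun]
  have h := ((hasDerivAt_phi1_shift hp hq hΦ hpper E 1 x).mul (hasDerivAt_phi0 hΦ E 0 0 x)).sub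
    ((hasDerivAt_phi1_shift hp hq hΦ hpper E 0 x).mul (hasDerivAt_phi0 hΦ E 0 1 x))
  refine h.congr_deriv ?_
  rw [m_rep1 hp hq hΦ E x 0, m_rep0 hp hq hΦ E x 1]
  ring

end AKNS2

section Analytic

variable {p q : ℝ → ℂ} {Φ : ℂ → ℝ → ℝ → Matrix (Fin 2) (Fin 2) ℂ}
  (hp : Continuous p) (hq : Continuous q)
  (hΦ : IsFundamentalMatrix p q Φ)

lemma absE_le {E₁ E : ℂ} (hE : E ∈ Metric.closedBall E₁ 1) : ‖E‖ ≤ ‖E₁‖ + 1 := by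
  have h := Metric.mem_closedBall.mp hE
  rw [dist_eq_norm] at h
  calc ‖E‖ = ‖E₁ + (E - E₁)‖ := by ring_nf
    _ ≤ ‖E₁‖ + ‖E - E₁‖ := norm_add_le _ _
    _ ≤ ‖E₁‖ + 1 := by linarith

lemma akns_rhs_bound (p q : ℝ → ℂ) (E a b : ℂ) (y : ℝ) :
    ‖((q y * b - I*E*a, p y * a + I*E*b) : ℂ × ℂ)‖
      ≤ (‖q y‖ + ‖p y‖ + 2*‖E‖) * ‖((a,b) : ℂ × ℂ)‖ := by
  have hsw : ‖((b, a) : ℂ × ℂ)‖ = ‖((a,b) : ℂ × ℂ)‖ := by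
    rw [Prod.norm_def, Prod.norm_def]; exact max_comm _ _
  calc ‖((q y * b - I*E*a, p y * a + I*E*b) : ℂ × ℂ)‖
      = ‖((q y * b + (-(I*E)) * a, (I*E) * b + p y * a) : ℂ × ℂ)‖ := by
        congr 1
        simp only [Prod.mk.injEq]
        constructor <;> ring
    _ ≤ (‖q y‖ + ‖-(I*E)‖ + ‖I*E‖ + ‖p y‖) * ‖((b, a) : ℂ × ℂ)‖ := pair_lin_bound _ _ _ _ _ _
    _ = (‖q y‖ + ‖p y‖ + 2*‖E‖) * ‖((a,b) : ℂ × ℂ)‖ := by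
        rw [hsw]
        have h1 : ‖-(I*E)‖ = ‖E‖ := by simp
        have h2 : ‖I*E‖ = ‖E‖ := by simp
        rw [h1, h2]; ring

include hp hq hΦ

lemma phi_col_bound (E₁ : ℂ) (x₀ T K : ℝ) (hT : 0 ≤ T) (hK0 : 0 ≤ K)
    (hK : ∀ t ∈ Set.Icc (x₀ - T) (x₀ + T), ‖q t‖ + ‖p t‖ + 2*(‖E₁‖ + 1) ≤ K) :
    ∀ E ∈ Metric.closedBall E₁ 1, ∀ y ∈ Set.Icc (x₀ - T) (x₀ + T), ∀ j,
      ‖((Φ E y x₀ 0 j, Φ E y x₀ 1 j) : ℂ × ℂ)‖ ≤ Real.exp (K*T) := by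
  intro E hE y hy j
  have hsol := isSol_col hΦ E x₀ j
  have hδ : ‖((Φ E x₀ x₀ 0 j, Φ E x₀ x₀ 1 j) : ℂ × ℂ)‖ ≤ 1 := by
    rw [show ((Φ E x₀ x₀ 0 j, Φ E x₀ x₀ 1 j) : ℂ × ℂ)
        = (((1 : Matrix (Fin 2) (Fin 2) ℂ) 0 j, (1 : Matrix (Fin 2) (Fin 2) ℂ) 1 j) : ℂ × ℂ) by
      rw [(hΦ E x₀).2]]
    apply pair_norm_le <;> fin_cases j <;> simp [Matrix.one_apply]
  have hb : ∀ t ∈ Set.Icc (x₀ - T) (x₀ + T),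
      ‖(q t * (Φ E t x₀ 1 j) - I*E*(Φ E t x₀ 0 j),
        p t * (Φ E t x₀ 0 j) + I*E*(Φ E t x₀ 1 j))‖
        ≤ K * ‖((Φ E t x₀ 0 j, Φ E t x₀ 1 j) : ℂ × ℂ)‖ + 0 := by
    intro t ht
    rw [add_zero]
    refine le_trans (akns_rhs_bound p q E _ _ t) (mul_le_mul_of_nonneg_right ?_ (norm_nonneg _))
    have h1 := absE_le hE
    have h2 := hK t ht
    linarith
  have h := gronwall_two_sided _ _ (fun t => hsol t) x₀ T K 0 1 hK0 le_rfl hδ hb y hy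
  refine h.trans ?_
  have := gronwallBound_le_aux (δ := 1) (K := K) (ε := 0) (T := T)
    zero_le_one hK0 le_rfl hT
  simpa using this

lemma phi_lipE (E₁ : ℂ) (x₀ T K : ℝ) (hT : 0 ≤ T) (hK0 : 0 ≤ K)
    (hK : ∀ t ∈ Set.Icc (x₀ - T) (x₀ + T), ‖q t‖ + ‖p t‖ + 2*(‖E₁‖ + 1) ≤ K) :
    ∀ E ∈ Metric.closedBall E₁ 1, ∀ E' ∈ Metric.closedBall E₁ 1,
    ∀ y ∈ Set.Icc (x₀ - T) (x₀ + T), ∀ j,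
      ‖((Φ E' y x₀ 0 j - Φ E y x₀ 0 j, Φ E' y x₀ 1 j - Φ E y x₀ 1 j) : ℂ × ℂ)‖
        ≤ (Real.exp (K*T) * T * Real.exp (K*T)) * ‖E' - E‖ := by
  intro E hE E' hE' y hy j
  set B : ℝ := Real.exp (K*T) with hB
  have hBnn : 0 ≤ B := (Real.exp_pos _).le
  have hbd := phi_col_bound hp hq hΦ E₁ x₀ T K hT hK0 hK
  set D : ℝ → ℂ × ℂ := fun t =>
    ((Φ E' t x₀ 0 j - Φ E t x₀ 0 j, Φ E' t x₀ 1 j - Φ E t x₀ 1 j) : ℂ × ℂ) with hD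
  have hder : ∀ t, HasDerivAt D
      ((q t * (D t).2 - I*E'*(D t).1 + (-(I*(E'-E)))*(Φ E t x₀ 0 j),
        p t * (D t).1 + I*E'*(D t).2 + (I*(E'-E))*(Φ E t x₀ 1 j)) : ℂ × ℂ) t := by
    intro t
    have h := (((hasDerivAt_phi0 hΦ E' x₀ j t).sub (hasDerivAt_phi0 hΦ E x₀ j t)).prodMk
      (((hasDerivAt_phi1 hΦ E' x₀ j t).sub (hasDerivAt_phi1 hΦ E x₀ j t))))
    refine h.congr_deriv ?_
    simp only [hD, Prod.mk.injEq]
    constructor <;> ring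
  have hb : ∀ t ∈ Set.Icc (x₀ - T) (x₀ + T),
      ‖((q t * (D t).2 - I*E'*(D t).1 + (-(I*(E'-E)))*(Φ E t x₀ 0 j),
        p t * (D t).1 + I*E'*(D t).2 + (I*(E'-E))*(Φ E t x₀ 1 j)) : ℂ × ℂ)‖
        ≤ K * ‖D t‖ + ‖E' - E‖ * B := by
    intro t ht
    have hsplit : ((q t * (D t).2 - I*E'*(D t).1 + (-(I*(E'-E)))*(Φ E t x₀ 0 j),
        p t * (D t).1 + I*E'*(D t).2 + (I*(E'-E))*(Φ E t x₀ 1 j)) : ℂ × ℂ)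
        = ((q t * (D t).2 - I*E'*(D t).1, p t * (D t).1 + I*E'*(D t).2) : ℂ × ℂ)
          + (((-(I*(E'-E)))*(Φ E t x₀ 0 j), (I*(E'-E))*(Φ E t x₀ 1 j)) : ℂ × ℂ) := by
      simp only [Prod.mk_add_mk]
    rw [hsplit]
    refine le_trans (norm_add_le _ _) (add_le_add ?_ ?_)
    · have h1 : ‖((q t * (D t).2 - I*E'*(D t).1, p t * (D t).1 + I*E'*(D t).2) : ℂ × ℂ)‖
          ≤ (‖q t‖ + ‖p t‖ + 2*‖E'‖) * ‖(((D t).1, (D t).2) : ℂ × ℂ)‖ :=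
        akns_rhs_bound p q E' _ _ t
      rw [Prod.mk.eta] at h1
      refine h1.trans (mul_le_mul_of_nonneg_right ?_ (norm_nonneg _))
      have h2 := absE_le hE'
      have h3 := hK t ht
      linarith
    · apply pair_norm_le
      · rw [norm_mul]
        have h4 : ‖-(I*(E'-E))‖ = ‖E'-E‖ := by simp
        rw [h4]
        exact mul_le_mul_of_nonneg_left
          (le_trans (norm_fst_le ((Φ E t x₀ 0 j, Φ E t x₀ 1 j) : ℂ × ℂ)) (hbd E hE t ht j)) (norm_nonneg _)
      · rw [norm_mul]
        have h4 : ‖I*(E'-E)‖ = ‖E'-E‖ := by simp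
        rw [h4]
        exact mul_le_mul_of_nonneg_left
          (le_trans (norm_snd_le ((Φ E t x₀ 0 j, Φ E t x₀ 1 j) : ℂ × ℂ)) (hbd E hE t ht j)) (norm_nonneg _)
  have h0 : ‖D x₀‖ ≤ 0 := by
    have h1 := (hΦ E x₀).2
    have h2 := (hΦ E' x₀).2
    simp [hD, h1, h2]
  have h := gronwall_two_sided D _ hder x₀ T K (‖E' - E‖ * B) 0 hK0
    (by positivity) h0 hb y hy
  refine h.trans ?_
  have h6 := gronwallBound_le_aux (δ := 0) (K := K) (ε := ‖E' - E‖ * B)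
    le_rfl hK0 (by positivity) hT
  refine h6.trans (le_of_eq ?_)
  rw [hB]; ring

lemma phi_entry_differentiable :
    ∀ (x₀ y : ℝ) (i j : Fin 2), Differentiable ℂ (fun E => Φ E y x₀ i j) := by
  intro x₀ y i j E₁
  set T : ℝ := |y - x₀| + 1 with hTdef
  have hT : 0 ≤ T := by positivity
  have hy : y ∈ Set.Icc (x₀ - T) (x₀ + T) := by
    constructor <;> rw [hTdef] <;> cases abs_cases (y - x₀) <;> linarith [abs_nonneg (y-x₀)]
  obtain ⟨c, hc⟩ := (isCompact_Icc (a := x₀ - T) (b := x₀ + T)).exists_bound_of_continuousOn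
    ((hq.norm.add hp.norm).continuousOn)
  set K : ℝ := max c 0 + 2*(‖E₁‖ + 1) with hKdef
  have hK0 : 0 ≤ K := by positivity
  have hK : ∀ t ∈ Set.Icc (x₀ - T) (x₀ + T), ‖q t‖ + ‖p t‖ + 2*(‖E₁‖ + 1) ≤ K := by
    intro t ht
    have h1 := hc t ht
    have h2 : ‖q t‖ + ‖p t‖ ≤ max c 0 := by
      refine le_trans ?_ (le_max_left _ _)
      refine le_trans (le_abs_self _) ?_
      simpa using h1
    rw [hKdef]; linarith
  set B : ℝ := Real.exp (K*T) with hB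
  have hBnn : 0 ≤ B := (Real.exp_pos _).le
  set C₁ : ℝ := B * T * B with hC₁
  have hC₁nn : 0 ≤ C₁ := by positivity
  set C₂ : ℝ := C₁ * T * B with hC₂
  have hC₂nn : 0 ≤ C₂ := by positivity
  have hlip := phi_lipE hp hq hΦ E₁ x₀ T K hT hK0 hK
  set S1 : ℂ → ℝ → ℂ := fun E' t => (E' - E₁)⁻¹ * (Φ E' t x₀ 0 j - Φ E₁ t x₀ 0 j) with hS1
  set S2 : ℂ → ℝ → ℂ := fun E' t => (E' - E₁)⁻¹ * (Φ E' t x₀ 1 j - Φ E₁ t x₀ 1 j) with hS2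
  -- slopes are bounded by C₁ on the closed ball
  have hSbd : ∀ E' ∈ Metric.closedBall E₁ 1, ∀ t ∈ Set.Icc (x₀ - T) (x₀ + T),
      ‖((S1 E' t, S2 E' t) : ℂ × ℂ)‖ ≤ C₁ := by
    intro E' hE' t ht
    rcases eq_or_ne E' E₁ with rfl | hne
    · simp [hS1, hS2, Prod.norm_def, hC₁nn]
    · have h1 := hlip E₁ (Metric.mem_closedBall_self zero_le_one) E' hE' t ht j
      have h2 : ((S1 E' t, S2 E' t) : ℂ × ℂ) = (E' - E₁)⁻¹ •
          ((Φ E' t x₀ 0 j - Φ E₁ t x₀ 0 j, Φ E' t x₀ 1 j - Φ E₁ t x₀ 1 j) : ℂ × ℂ) := by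
        simp [hS1, hS2, Prod.smul_mk, smul_eq_mul]
      rw [h2, norm_smul, norm_inv]
      have h3 : (0:ℝ) < ‖E' - E₁‖ := by
        simp [norm_pos_iff, sub_eq_zero, hne]
      calc ‖E' - E₁‖⁻¹ * ‖((Φ E' t x₀ 0 j - Φ E₁ t x₀ 0 j,
              Φ E' t x₀ 1 j - Φ E₁ t x₀ 1 j) : ℂ × ℂ)‖
          ≤ ‖E' - E₁‖⁻¹ * (C₁ * ‖E' - E₁‖) := by
            apply mul_le_mul_of_nonneg_left _ (by positivity)
            simpa [hC₁, hB] using h1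
        _ = C₁ := by
            have h4 : ‖E' - E₁‖ ≠ 0 := ne_of_gt h3
            field_simp [h4]
  -- slope differences are Lipschitz
  have hZlip : ∀ E', E' ∈ Metric.closedBall E₁ 1 → E' ≠ E₁ →
      ∀ E'', E'' ∈ Metric.closedBall E₁ 1 → E'' ≠ E₁ →
      ‖((S1 E' y - S1 E'' y, S2 E' y - S2 E'' y) : ℂ × ℂ)‖ ≤ C₂ * ‖E' - E''‖ := by
    intro E' hE' hne' E'' hE'' hne''
    have hne1 : E' - E₁ ≠ 0 := sub_ne_zero.mpr hne'
    have hne2 : E'' - E₁ ≠ 0 := sub_ne_zero.mpr hne''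
    set Z : ℝ → ℂ × ℂ := fun t => ((S1 E' t - S1 E'' t, S2 E' t - S2 E'' t) : ℂ × ℂ) with hZ
    have hder : ∀ s, HasDerivAt Z
        ((q s * (Z s).2 - I*E'*(Z s).1 + (-(I*(E'-E'')))*(S1 E'' s),
          p s * (Z s).1 + I*E'*(Z s).2 + (I*(E'-E''))*(S2 E'' s)) : ℂ × ℂ) s := by
      intro s
      have hda : ∀ Ea : ℂ, HasDerivAt (fun t => S1 Ea t)
          ((Ea - E₁)⁻¹ * ((q s * Φ Ea s x₀ 1 j - I*Ea*Φ Ea s x₀ 0 j)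
            - (q s * Φ E₁ s x₀ 1 j - I*E₁*Φ E₁ s x₀ 0 j))) s := fun Ea =>
        (((hasDerivAt_phi0 hΦ Ea x₀ j s).sub (hasDerivAt_phi0 hΦ E₁ x₀ j s)).const_mul _)
      have hdb : ∀ Ea : ℂ, HasDerivAt (fun t => S2 Ea t)
          ((Ea - E₁)⁻¹ * ((p s * Φ Ea s x₀ 0 j + I*Ea*Φ Ea s x₀ 1 j)
            - (p s * Φ E₁ s x₀ 0 j + I*E₁*Φ E₁ s x₀ 1 j))) s := fun Ea =>
        (((hasDerivAt_phi1 hΦ Ea x₀ j s).sub (hasDerivAt_phi1 hΦ E₁ x₀ j s)).const_mul _)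
      have h := ((hda E').sub (hda E'')).prodMk ((hdb E').sub (hdb E''))
      refine h.congr_deriv ?_
      simp only [hZ, hS1, hS2, Prod.mk.injEq]
      constructor
      · field_simp
        ring
      · field_simp
        ring
    have hb : ∀ t ∈ Set.Icc (x₀ - T) (x₀ + T),
        ‖((q t * (Z t).2 - I*E'*(Z t).1 + (-(I*(E'-E'')))*(S1 E'' t),
          p t * (Z t).1 + I*E'*(Z t).2 + (I*(E'-E''))*(S2 E'' t)) : ℂ × ℂ)‖
          ≤ K * ‖Z t‖ + ‖E' - E''‖ * C₁ := by
      intro t ht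
      have hsplit : ((q t * (Z t).2 - I*E'*(Z t).1 + (-(I*(E'-E'')))*(S1 E'' t),
          p t * (Z t).1 + I*E'*(Z t).2 + (I*(E'-E''))*(S2 E'' t)) : ℂ × ℂ)
          = ((q t * (Z t).2 - I*E'*(Z t).1, p t * (Z t).1 + I*E'*(Z t).2) : ℂ × ℂ)
            + (((-(I*(E'-E'')))*(S1 E'' t), (I*(E'-E''))*(S2 E'' t)) : ℂ × ℂ) := by
        simp only [Prod.mk_add_mk]
      rw [hsplit]
      refine le_trans (norm_add_le _ _) (add_le_add ?_ ?_)
      · have h1 : ‖((q t * (Z t).2 - I*E'*(Z t).1, p t * (Z t).1 + I*E'*(Z t).2) : ℂ × ℂ)‖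
            ≤ (‖q t‖ + ‖p t‖ + 2*‖E'‖) * ‖(((Z t).1, (Z t).2) : ℂ × ℂ)‖ :=
          akns_rhs_bound p q E' _ _ t
        rw [Prod.mk.eta] at h1
        refine h1.trans (mul_le_mul_of_nonneg_right ?_ (norm_nonneg _))
        have h2 := absE_le hE'
        have h3 := hK t ht
        linarith
      · have h5 := hSbd E'' hE'' t ht
        apply pair_norm_le
        · rw [norm_mul]
          have h4 : ‖-(I*(E'-E''))‖ = ‖E'-E''‖ := by simp
          rw [h4]
          exact mul_le_mul_of_nonneg_left
            (le_trans (norm_fst_le ((S1 E'' t, S2 E'' t) : ℂ × ℂ)) h5) (norm_nonneg _)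
        · rw [norm_mul]
          have h4 : ‖I*(E'-E'')‖ = ‖E'-E''‖ := by simp
          rw [h4]
          exact mul_le_mul_of_nonneg_left
            (le_trans (norm_snd_le ((S1 E'' t, S2 E'' t) : ℂ × ℂ)) h5) (norm_nonneg _)
    have h0 : ‖Z x₀‖ ≤ 0 := by
      have h1 := (hΦ E' x₀).2
      have h2 := (hΦ E'' x₀).2
      have h3 := (hΦ E₁ x₀).2
      simp [hZ, hS1, hS2, h1, h2, h3]
    have h := gronwall_two_sided Z _ hder x₀ T K (‖E' - E''‖ * C₁) 0 hK0
      (by positivity) h0 hb y hy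
    refine h.trans ?_
    have h6 := gronwallBound_le_aux (δ := 0) (K := K) (ε := ‖E' - E''‖ * C₁)
      le_rfl hK0 (by positivity) hT
    refine h6.trans (le_of_eq ?_)
    rw [hC₂, hB]; ring
  -- existence of the limit of slopes
  have hball : Metric.ball E₁ 1 ∩ {E₁}ᶜ ∈ 𝓝[≠] E₁ :=
    Filter.inter_mem (mem_nhdsWithin_of_mem_nhds (Metric.ball_mem_nhds E₁ one_pos))
      self_mem_nhdsWithin
  have hcauchy : Cauchy (Filter.map (fun E' => ((S1 E' y, S2 E' y) : ℂ × ℂ)) (𝓝[≠] E₁)) := by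
    rw [Metric.cauchy_iff]
    constructor
    · exact Filter.NeBot.map inferInstance _
    · intro ε hε
      set δ : ℝ := min 1 (ε / (2 * (C₂ + 1))) with hδdef
      have hδpos : 0 < δ := lt_min one_pos (by positivity)
      refine ⟨(fun E' => ((S1 E' y, S2 E' y) : ℂ × ℂ)) '' (Metric.ball E₁ δ ∩ {E₁}ᶜ), ?_, ?_⟩
      · apply Filter.image_mem_map
        exact Filter.inter_mem
          (mem_nhdsWithin_of_mem_nhds (Metric.ball_mem_nhds E₁ hδpos)) self_mem_nhdsWithin
      · rintro u ⟨a, ⟨ha1, ha2⟩, rfl⟩ v ⟨b, ⟨hb1, hb2⟩, rfl⟩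
        have hane : a ≠ E₁ := by simpa using ha2
        have hbne : b ≠ E₁ := by simpa using hb2
        have hδ1 : δ ≤ 1 := min_le_left _ _
        have haball : a ∈ Metric.closedBall E₁ 1 :=
          Metric.mem_closedBall.mpr (le_trans (Metric.mem_ball.mp ha1).le hδ1)
        have hbball : b ∈ Metric.closedBall E₁ 1 :=
          Metric.mem_closedBall.mpr (le_trans (Metric.mem_ball.mp hb1).le hδ1)
        have hZ := hZlip a haball hane b hbball hbne
        rw [dist_eq_norm]
        have heq : ((S1 a y, S2 a y) : ℂ × ℂ) - ((S1 b y, S2 b y) : ℂ × ℂ)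
            = ((S1 a y - S1 b y, S2 a y - S2 b y) : ℂ × ℂ) := rfl
        rw [heq]
        have hab : ‖a - b‖ ≤ 2 * δ := by
          have h1 : dist a b ≤ dist a E₁ + dist E₁ b := dist_triangle _ _ _
          have h2 : dist E₁ b = dist b E₁ := dist_comm _ _
          have h3 := Metric.mem_ball.mp ha1
          have h4 := Metric.mem_ball.mp hb1
          rw [← dist_eq_norm]
          linarith
        have h7 : δ * (2 * (C₂ + 1)) ≤ ε := by
          have := min_le_right (1:ℝ) (ε / (2 * (C₂ + 1)))
          rw [hδdef]
          exact (le_div_iff₀ (by positivity)).mp this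
        calc ‖((S1 a y - S1 b y, S2 a y - S2 b y) : ℂ × ℂ)‖ ≤ C₂ * ‖a - b‖ := hZ
          _ ≤ C₂ * (2 * δ) := mul_le_mul_of_nonneg_left hab hC₂nn
          _ < ε := by nlinarith
  obtain ⟨L, hL⟩ := CompleteSpace.complete hcauchy
  have hslope : Filter.Tendsto
      (slope (fun E => ((Φ E y x₀ 0 j, Φ E y x₀ 1 j) : ℂ × ℂ)) E₁) (𝓝[≠] E₁) (𝓝 L) := by
    refine Filter.Tendsto.congr' ?_ hL
    filter_upwards [self_mem_nhdsWithin] with E' hne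
    rw [slope_def_module]
    simp only [hS1, hS2, Prod.mk_sub_mk, Prod.smul_mk, smul_eq_mul]
  have hD : HasDerivAt (fun E => ((Φ E y x₀ 0 j, Φ E y x₀ 1 j) : ℂ × ℂ)) L E₁ :=
    hasDerivAt_iff_tendsto_slope.mpr hslope
  fin_cases i
  · exact hD.differentiableAt.fst
  · exact hD.differentiableAt.snd

end Analytic



section Coef

variable (E₀ : ℂ)

lemma circleMap01_ne_zero (θ : ℝ) : circleMap 0 1 θ ≠ 0 := by
  intro h
  have h1 : ‖circleMap 0 1 θ‖ = 1 := by simpa using norm_circleMap_zero 1 θ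
  rw [h] at h1
  simp at h1

/-- The `k`-th Taylor coefficient of `f` at `E₀`, via a circle integral of radius `1`. -/
def coefI (f : ℂ → ℂ) (k : ℕ) : ℂ :=
  (2*(Real.pi:ℂ))⁻¹ * ∫ θ in (0:ℝ)..(2*Real.pi),
    ((circleMap 0 1 θ)⁻¹)^k * f (circleMap E₀ 1 θ)

lemma coefI_eq_coeff (f : ℂ → ℂ) (k : ℕ) :
    coefI E₀ f k = (cauchyPowerSeries f E₀ 1).coeff k := by
  have hI : (I : ℂ) ≠ 0 := I_ne_zero
  have hπ : ((Real.pi:ℂ)) ≠ 0 := by exact_mod_cast Real.pi_ne_zero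
  have h1 : (cauchyPowerSeries f E₀ 1).coeff k
      = cauchyPowerSeries f E₀ 1 k (fun _ => 1) := rfl
  rw [h1, cauchyPowerSeries_apply, coefI, circleIntegral]
  simp only [deriv_circleMap, circleMap_sub_center, smul_eq_mul]
  rw [← intervalIntegral.integral_const_mul ((2 * ↑Real.pi * I)⁻¹),
      ← intervalIntegral.integral_const_mul ((2*(Real.pi:ℂ))⁻¹)]
  apply intervalIntegral.integral_congr
  intro θ _
  have he : circleMap 0 1 θ ≠ 0 := circleMap01_ne_zero θ
  field_simp

lemma coefI_add (f g : ℂ → ℂ) (hf : Continuous f) (hg : Continuous g) (k : ℕ) :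
    coefI E₀ (fun z => f z + g z) k = coefI E₀ f k + coefI E₀ g k := by
  have hwt : Continuous (fun θ : ℝ => ((circleMap 0 1 θ)⁻¹)^k) :=
    ((continuous_circleMap 0 1).inv₀ circleMap01_ne_zero).pow k
  have hif : IntervalIntegrable (fun θ => ((circleMap 0 1 θ)⁻¹)^k * f (circleMap E₀ 1 θ))
      MeasureTheory.volume 0 (2*Real.pi) :=
    (hwt.mul (hf.comp (continuous_circleMap E₀ 1))).intervalIntegrable _ _
  have hig : IntervalIntegrable (fun θ => ((circleMap 0 1 θ)⁻¹)^k * g (circleMap E₀ 1 θ))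
      MeasureTheory.volume 0 (2*Real.pi) :=
    (hwt.mul (hg.comp (continuous_circleMap E₀ 1))).intervalIntegrable _ _
  rw [coefI, coefI, coefI]
  rw [show (fun θ => ((circleMap 0 1 θ)⁻¹)^k * (f (circleMap E₀ 1 θ) + g (circleMap E₀ 1 θ)))
      = fun θ => ((circleMap 0 1 θ)⁻¹)^k * f (circleMap E₀ 1 θ)
        + ((circleMap 0 1 θ)⁻¹)^k * g (circleMap E₀ 1 θ) from funext fun θ => by ring]
  rw [intervalIntegral.integral_add hif hig]
  ring

lemma coefI_const_mul (f : ℂ → ℂ) (c : ℂ) (k : ℕ) :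
    coefI E₀ (fun z => c * f z) k = c * coefI E₀ f k := by
  rw [coefI, coefI]
  rw [show (fun θ => ((circleMap 0 1 θ)⁻¹)^k * (c * f (circleMap E₀ 1 θ)))
      = fun θ => c * (((circleMap 0 1 θ)⁻¹)^k * f (circleMap E₀ 1 θ)) from
    funext fun θ => by ring]
  rw [intervalIntegral.integral_const_mul]
  ring

lemma coefI_shift (f : ℂ → ℂ) (k : ℕ) :
    coefI E₀ (fun z => (z - E₀) * f z) (k+1) = coefI E₀ f k := by
  rw [coefI, coefI]
  congr 1
  apply intervalIntegral.integral_congr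
  intro θ _
  have he : circleMap 0 1 θ ≠ 0 := circleMap01_ne_zero θ
  simp only [circleMap_sub_center]
  rw [pow_succ]
  field_simp

lemma coefI_shift0 (f : ℂ → ℂ) (hf : Differentiable ℂ f) :
    coefI E₀ (fun z => (z - E₀) * f z) 0 = 0 := by
  have h0 : (∮ z in C(E₀, 1), f z) = 0 :=
    circleIntegral_eq_zero_of_differentiable_on_off_countable zero_le_one
      Set.countable_empty (hf.continuous.continuousOn)
      (fun z _ => hf z)
  rw [circleIntegral] at h0
  simp only [deriv_circleMap, smul_eq_mul] at h0
  have h1 : ∫ θ in (0:ℝ)..(2*Real.pi), circleMap 0 1 θ * f (circleMap E₀ 1 θ) = 0 := by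
    have h2 : (fun θ : ℝ => circleMap 0 1 θ * I * f (circleMap E₀ 1 θ))
        = fun θ : ℝ => I * (circleMap 0 1 θ * f (circleMap E₀ 1 θ)) :=
      funext fun θ => by ring
    rw [h2, intervalIntegral.integral_const_mul] at h0
    rcases mul_eq_zero.mp h0 with h | h
    · exact absurd h I_ne_zero
    · exact h
  rw [coefI]
  rw [show (fun θ => ((circleMap 0 1 θ)⁻¹)^0 * ((circleMap E₀ 1 θ - E₀) * f (circleMap E₀ 1 θ)))
      = fun θ => circleMap 0 1 θ * f (circleMap E₀ 1 θ) from funext fun θ => by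
    simp [circleMap_sub_center]]
  rw [h1, mul_zero]

lemma coefI_id0 (f : ℂ → ℂ) (hf : Differentiable ℂ f) :
    coefI E₀ (fun z => z * f z) 0 = E₀ * coefI E₀ f 0 := by
  have h1 : (fun z => z * f z) = fun z => (z - E₀) * f z + E₀ * f z :=
    funext fun z => by ring
  rw [h1, coefI_add E₀ (fun z => (z - E₀) * f z) (fun z => E₀ * f z) ((continuous_id.sub continuous_const).mul hf.continuous) (continuous_const.mul hf.continuous) 0,
    coefI_shift0 E₀ f hf, coefI_const_mul, zero_add]

lemma coefI_idsucc (f : ℂ → ℂ) (hf : Differentiable ℂ f) (k : ℕ) :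
    coefI E₀ (fun z => z * f z) (k+1) = E₀ * coefI E₀ f (k+1) + coefI E₀ f k := by
  have h1 : (fun z => z * f z) = fun z => E₀ * f z + (z - E₀) * f z :=
    funext fun z => by ring
  rw [h1, coefI_add E₀ (fun z => E₀ * f z) (fun z => (z - E₀) * f z) (continuous_const.mul hf.continuous) ((continuous_id.sub continuous_const).mul hf.continuous) (k+1),
    coefI_shift E₀ f k, coefI_const_mul]

lemma order_eq_series_order (f : ℂ → ℂ) (hf : Differentiable ℂ f)
    (hP : cauchyPowerSeries f E₀ 1 ≠ 0) :
    analyticOrderAt f E₀ = ((cauchyPowerSeries f E₀ 1).order : ℕ∞) := by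
  have hat : HasFPowerSeriesAt f (cauchyPowerSeries f E₀ 1) E₀ :=
    (hf.hasFPowerSeriesOnBall E₀ (R := 1) one_pos).hasFPowerSeriesAt
  rw [(hf.analyticAt E₀).analyticOrderAt_eq_natCast]
  exact ⟨_, ⟨_, hat.has_fpower_series_iterate_dslope_fslope (cauchyPowerSeries f E₀ 1).order⟩,
    hat.iterate_dslope_fslope_ne_zero hP, Filter.Eventually.of_forall hat.eq_pow_order_mul_iterate_dslope⟩

lemma coefI_eq_zero_of_le_order (f : ℂ → ℂ) (hf : Differentiable ℂ f) {n k : ℕ} (hk : k < n)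
    (h : (n : ℕ∞) ≤ analyticOrderAt f E₀) : coefI E₀ f k = 0 := by
  have hat : HasFPowerSeriesAt f (cauchyPowerSeries f E₀ 1) E₀ :=
    (hf.hasFPowerSeriesOnBall E₀ (R := 1) one_pos).hasFPowerSeriesAt
  rw [coefI_eq_coeff]
  by_cases hP : cauchyPowerSeries f E₀ 1 = 0
  · rw [hP]
    simp [FormalMultilinearSeries.coeff]
  · rw [order_eq_series_order E₀ f hf hP] at h
    have hn : n ≤ (cauchyPowerSeries f E₀ 1).order := by exact_mod_cast h
    exact FormalMultilinearSeries.coeff_eq_zero.mpr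
      ((cauchyPowerSeries f E₀ 1).apply_eq_zero_of_lt_order (lt_of_lt_of_le hk hn))

lemma le_order_of_coefI_eq_zero (f : ℂ → ℂ) (hf : Differentiable ℂ f) {n : ℕ}
    (h : ∀ k < n, coefI E₀ f k = 0) : (n : ℕ∞) ≤ analyticOrderAt f E₀ := by
  have hat : HasFPowerSeriesAt f (cauchyPowerSeries f E₀ 1) E₀ :=
    (hf.hasFPowerSeriesOnBall E₀ (R := 1) one_pos).hasFPowerSeriesAt
  by_cases hP : cauchyPowerSeries f E₀ 1 = 0
  · have h0 : ∀ᶠ z in 𝓝 E₀, f z = 0 := by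
      have := hP ▸ hat
      exact this.eventually_eq_zero
    rw [analyticOrderAt_eq_top.mpr h0]
    exact le_top
  · rw [order_eq_series_order E₀ f hf hP]
    have : n ≤ (cauchyPowerSeries f E₀ 1).order := by
      by_contra hlt
      push_neg at hlt
      exact (cauchyPowerSeries f E₀ 1).apply_order_ne_zero hP
        (FormalMultilinearSeries.coeff_eq_zero.mp
          ((coefI_eq_coeff E₀ f _).symm.trans (h _ hlt)))
    exact_mod_cast this

lemma rep_of_le_order {f : ℂ → ℂ} (hf : AnalyticAt ℂ f E₀) {n : ℕ}
    (h : (n : ℕ∞) ≤ analyticOrderAt f E₀) :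
    ∃ u, AnalyticAt ℂ u E₀ ∧ ∀ᶠ z in 𝓝 E₀, f z = (z - E₀)^n * u z := by
  rcases eq_or_ne (analyticOrderAt f E₀) ⊤ with htop | hne
  · have h0 := analyticOrderAt_eq_top.mp htop
    exact ⟨0, analyticAt_const, by filter_upwards [h0] with z hz; simp [hz]⟩
  · obtain ⟨N, hN'⟩ := WithTop.ne_top_iff_exists.mp hne
    have hN : analyticOrderAt f E₀ = (N : ℕ∞) := hN'.symm
    obtain ⟨g, hg, hg0, hrep⟩ := hf.analyticOrderAt_eq_natCast.mp hN
    have hnN : n ≤ N := by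
      rw [hN] at h
      exact_mod_cast h
    refine ⟨fun z => (z - E₀)^(N - n) * g z,
      ((analyticAt_id.sub analyticAt_const).pow _).mul hg, ?_⟩
    filter_upwards [hrep] with z hz
    rw [hz, smul_eq_mul, ← mul_assoc, ← pow_add, Nat.add_sub_cancel' hnN]

lemma le_order_of_rep {f u : ℂ → ℂ} (hf : AnalyticAt ℂ f E₀) {n : ℕ}
    (hu : AnalyticAt ℂ u E₀) (hrep : ∀ᶠ z in 𝓝 E₀, f z = (z - E₀)^n * u z) :
    (n : ℕ∞) ≤ analyticOrderAt f E₀ := by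
  by_contra hlt
  push_neg at hlt
  have hne : analyticOrderAt f E₀ ≠ ⊤ := ne_top_of_lt hlt
  obtain ⟨N, hN'⟩ := WithTop.ne_top_iff_exists.mp hne
  have hN : analyticOrderAt f E₀ = (N : ℕ∞) := hN'.symm
  have hNn : N < n := by
    rw [hN] at hlt
    exact_mod_cast hlt
  obtain ⟨g, hg, hg0, hgrep⟩ := hf.analyticOrderAt_eq_natCast.mp hN
  have hfreq : ∃ᶠ z in 𝓝[≠] E₀, g z = (z - E₀)^(n-N) * u z := by
    apply Filter.Eventually.frequently
    filter_upwards [hgrep.filter_mono nhdsWithin_le_nhds,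
      hrep.filter_mono nhdsWithin_le_nhds, self_mem_nhdsWithin] with z h1 h2 hz
    have hz0 : (z - E₀) ≠ 0 := sub_ne_zero.mpr hz
    rw [smul_eq_mul] at h1
    have h3 : (z - E₀)^N * g z = (z - E₀)^N * ((z - E₀)^(n-N) * u z) := by
      rw [← h1, h2, ← mul_assoc, ← pow_add, Nat.add_sub_cancel' hNn.le]
    exact mul_left_cancel₀ (pow_ne_zero N hz0) h3
  have hev := (hg.frequently_eq_iff_eventually_eq
    (((analyticAt_id.sub analyticAt_const).pow _).mul hu)).mp hfreq
  have hE := hev.self_of_nhds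
  simp only [Pi.mul_apply, Pi.pow_apply, Pi.sub_apply, id_eq, sub_self] at hE
  rw [zero_pow (by omega : n - N ≠ 0), zero_mul] at hE
  exact hg0 hE

end Coef

lemma coefI_sub (E₀ : ℂ) (f g : ℂ → ℂ) (hf : Continuous f) (hg : Continuous g) (k : ℕ) :
    coefI E₀ (fun z => f z - g z) k = coefI E₀ f k - coefI E₀ g k := by
  have h1 : (fun z => f z - g z) = fun z => f z + (-1 : ℂ) * g z := funext fun z => by ring
  rw [h1, coefI_add E₀ _ _ hf (by fun_prop) k, coefI_const_mul]
  ring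


/-- `preC c 0 = 0` and `preC c (k+1) = c k`. -/
def preC (c : ℕ → ℂ) : ℕ → ℂ
  | 0 => 0
  | (k+1) => c k

section CoefODE

variable {p q : ℝ → ℂ} {Φ : ℂ → ℝ → ℝ → Matrix (Fin 2) (Fin 2) ℂ}
  (hp : Continuous p) (hq : Continuous q)
  (hΦ : IsFundamentalMatrix p q Φ)
  {Ω : ℝ} (hpper : ∀ x, p (x + Ω) = p x) (hqper : ∀ x, q (x + Ω) = q x)
  (E₀ : ℂ)

/-- Differentiating a Cauchy-type coefficient integral in the parameter `x`. -/
lemma hasDerivAt_coefI_param (F dF : ℂ → ℝ → ℂ) (k : ℕ) (x₀ : ℝ)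
    (hder : ∀ E x, HasDerivAt (fun x => F E x) (dF E x) x)
    (hFcont : ∀ x, Continuous fun E => F E x)
    (hdFcont : Continuous fun E => dF E x₀)
    (C : ℝ) (hbC : ∀ E ∈ Metric.sphere E₀ 1, ∀ x ∈ Metric.ball x₀ 1, ‖dF E x‖ ≤ C) :
    HasDerivAt (fun x => coefI E₀ (fun E => F E x) k)
      (coefI E₀ (fun E => dF E x₀) k) x₀ := by
  have hwt : Continuous (fun θ : ℝ => ((circleMap 0 1 θ)⁻¹)^k) :=
    ((continuous_circleMap 0 1).inv₀ circleMap01_ne_zero).pow k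
  have hwt1 : ∀ θ : ℝ, ‖((circleMap 0 1 θ)⁻¹)^k‖ = 1 := by
    intro θ
    rw [norm_pow, norm_inv]
    simp
  have key := (intervalIntegral.hasDerivAt_integral_of_dominated_loc_of_deriv_le
    (F := fun (x : ℝ) (θ : ℝ) => ((circleMap 0 1 θ)⁻¹)^k * F (circleMap E₀ 1 θ) x)
    (F' := fun (x : ℝ) (θ : ℝ) => ((circleMap 0 1 θ)⁻¹)^k * dF (circleMap E₀ 1 θ) x)
    (bound := fun _ => C) (a := 0) (b := 2*Real.pi) (μ := MeasureTheory.volume)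
    (x₀ := x₀) (s := Metric.ball x₀ 1) (Metric.ball_mem_nhds x₀ one_pos)
    (Filter.Eventually.of_forall fun x =>
      (hwt.mul ((hFcont x).comp (continuous_circleMap E₀ 1))).aestronglyMeasurable)
    ((hwt.mul ((hFcont x₀).comp (continuous_circleMap E₀ 1))).intervalIntegrable _ _)
    ((hwt.mul (hdFcont.comp (continuous_circleMap E₀ 1))).aestronglyMeasurable)
    (Filter.Eventually.of_forall fun θ _ x hx => by
      rw [norm_mul, hwt1, one_mul]
      exact hbC _ (circleMap_mem_sphere E₀ zero_le_one θ) x hx)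
    intervalIntegrable_const
    (Filter.Eventually.of_forall fun θ _ x _ =>
      (hder (circleMap E₀ 1 θ) x).const_mul _)).2
  exact key.const_mul ((2*(Real.pi:ℂ))⁻¹)

include hp hq hΦ

/-- Uniform bound for monodromy entries on compacta. -/
lemma m_entry_bound (x₀ : ℝ) :
    ∃ C, 0 ≤ C ∧ ∀ E ∈ Metric.closedBall E₀ 1, ∀ x ∈ Metric.closedBall x₀ 1,
      ∀ i j : Fin 2, ‖Φ E (x+Ω) x i j‖ ≤ C := by
  set T : ℝ := |x₀| + |Ω| + 2 with hT
  have hT0 : 0 ≤ T := by positivity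
  obtain ⟨c, hc⟩ := (isCompact_Icc (a := (0:ℝ) - T) (b := 0 + T)).exists_bound_of_continuousOn
    ((hq.norm.add hp.norm).continuousOn)
  set K : ℝ := max c 0 + 2*(‖E₀‖ + 1) with hK
  have hK0 : 0 ≤ K := by positivity
  have hKb : ∀ t ∈ Set.Icc ((0:ℝ) - T) (0 + T), ‖q t‖ + ‖p t‖ + 2*(‖E₀‖ + 1) ≤ K := by
    intro t ht
    have h1 := hc t ht
    have h2 : ‖q t‖ + ‖p t‖ ≤ max c 0 :=
      le_trans (le_trans (le_abs_self _) (by simpa using h1)) (le_max_left _ _)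
    rw [hK]; linarith
  set B : ℝ := Real.exp (K*T) with hB
  have hBnn : 0 ≤ B := (Real.exp_pos _).le
  have hbd := phi_col_bound hp hq hΦ E₀ 0 T K hT0 hK0 hKb
  have hmem : ∀ x ∈ Metric.closedBall x₀ 1, x ∈ Set.Icc ((0:ℝ) - T) (0 + T)
      ∧ x + Ω ∈ Set.Icc ((0:ℝ) - T) (0 + T) := by
    intro x hx
    have h1 : |x - x₀| ≤ 1 := by
      have := Metric.mem_closedBall.mp hx
      rwa [Real.dist_eq] at this
    have h2 := abs_sub_abs_le_abs_sub x x₀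
    have h3 : |x| ≤ |x₀| + 1 := by
      cases abs_cases x <;> cases abs_cases x₀ <;> cases abs_cases (x - x₀) <;> linarith
    constructor
    · constructor <;> rw [hT] <;> cases abs_cases x <;> linarith [abs_nonneg Ω]
    · have h4 : |x + Ω| ≤ |x| + |Ω| := abs_add_le _ _
      constructor <;> rw [hT] <;> cases abs_cases (x + Ω) <;> linarith
  have hent : ∀ E ∈ Metric.closedBall E₀ 1, ∀ y ∈ Set.Icc ((0:ℝ) - T) (0 + T),
      ∀ i j : Fin 2, ‖Φ E y 0 i j‖ ≤ B := by
    intro E hE y hy i j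
    have h := hbd E hE y hy j
    fin_cases i
    · exact le_trans (norm_fst_le ((Φ E y 0 0 j, Φ E y 0 1 j) : ℂ × ℂ)) h
    · exact le_trans (norm_snd_le ((Φ E y 0 0 j, Φ E y 0 1 j) : ℂ × ℂ)) h
  refine ⟨2*B^2, by positivity, ?_⟩
  intro E hE x hx i j
  obtain ⟨hx1, hx2⟩ := hmem x hx
  have habs : ∀ a b c d : ℂ, ‖a‖ ≤ B → ‖b‖ ≤ B → ‖c‖ ≤ B → ‖d‖ ≤ B →
      ‖a*b - c*d‖ ≤ 2*B^2 := by
    intro a b c d h1 h2 h3 h4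
    calc ‖a*b - c*d‖ ≤ ‖a*b‖ + ‖c*d‖ := norm_sub_le _ _
      _ = ‖a‖*‖b‖ + ‖c‖*‖d‖ := by rw [norm_mul, norm_mul]
      _ ≤ 2*B^2 := by nlinarith [norm_nonneg a, norm_nonneg b, norm_nonneg c, norm_nonneg d]
  fin_cases j
  · show ‖Φ E (x+Ω) x i 0‖ ≤ 2*B^2
    rw [m_rep0 hp hq hΦ E x i]
    exact habs _ _ _ _ (hent E hE _ hx2 i 0) (hent E hE _ hx1 1 1)
      (hent E hE _ hx2 i 1) (hent E hE _ hx1 1 0)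
  · show ‖Φ E (x+Ω) x i 1‖ ≤ 2*B^2
    rw [m_rep1 hp hq hΦ E x i]
    exact habs _ _ _ _ (hent E hE _ hx2 i 1) (hent E hE _ hx1 0 0)
      (hent E hE _ hx2 i 0) (hent E hE _ hx1 0 1)

end CoefODE

section CoefODE2

variable {p q : ℝ → ℂ} {Φ : ℂ → ℝ → ℝ → Matrix (Fin 2) (Fin 2) ℂ}
  (hp : Continuous p) (hq : Continuous q)
  (hΦ : IsFundamentalMatrix p q Φ)
  {Ω : ℝ} (hpper : ∀ x, p (x + Ω) = p x) (hqper : ∀ x, q (x + Ω) = q x)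
  (E₀ : ℂ)

include hp hq hΦ

/-- Common bound for the commutator entries. -/
lemma dM_bound (x₀ : ℝ) :
    ∃ C, ∀ E ∈ Metric.sphere E₀ 1, ∀ x ∈ Metric.ball x₀ 1,
      (‖q x * Φ E (x+Ω) x 1 0 - p x * Φ E (x+Ω) x 0 1‖ ≤ C ∧
       ‖q x * (Φ E (x+Ω) x 1 1 - Φ E (x+Ω) x 0 0) - 2*I*E*Φ E (x+Ω) x 0 1‖ ≤ C ∧
       ‖p x * (Φ E (x+Ω) x 0 0 - Φ E (x+Ω) x 1 1) + 2*I*E*Φ E (x+Ω) x 1 0‖ ≤ C ∧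
       ‖p x * Φ E (x+Ω) x 0 1 - q x * Φ E (x+Ω) x 1 0‖ ≤ C) := by
  obtain ⟨CM, hCM0, hCM⟩ := m_entry_bound hp hq hΦ (E₀ := E₀) (Ω := Ω) x₀
  obtain ⟨cpq, hcpq⟩ := (isCompact_Icc (a := x₀ - 1) (b := x₀ + 1)).exists_bound_of_continuousOn
    ((hq.norm.add hp.norm).continuousOn)
  set Q : ℝ := max cpq 0 with hQ
  have hQ0 : 0 ≤ Q := le_max_right _ _
  refine ⟨Q*(2*CM) + 2*(‖E₀‖+1)*CM, ?_⟩
  intro E hE x hx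
  have hEcb : E ∈ Metric.closedBall E₀ 1 := Metric.sphere_subset_closedBall hE
  have hxcb : x ∈ Metric.closedBall x₀ 1 := Metric.ball_subset_closedBall hx
  have hxI : x ∈ Set.Icc (x₀ - 1) (x₀ + 1) := by
    have h := Metric.mem_closedBall.mp hxcb
    rw [Real.dist_eq] at h
    constructor <;> cases abs_cases (x - x₀) <;> linarith
  have hqb : ‖q x‖ ≤ Q := by
    have h1 := hcpq x hxI
    have h2 : ‖q x‖ + ‖p x‖ ≤ cpq := le_trans (le_abs_self _) (by simpa using h1)
    have := norm_nonneg (p x)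
    refine le_trans ?_ (le_max_left _ _)
    linarith
  have hpb : ‖p x‖ ≤ Q := by
    have h1 := hcpq x hxI
    have h2 : ‖q x‖ + ‖p x‖ ≤ cpq := le_trans (le_abs_self _) (by simpa using h1)
    have := norm_nonneg (q x)
    refine le_trans ?_ (le_max_left _ _)
    linarith
  have hEb : ‖E‖ ≤ ‖E₀‖ + 1 := absE_le hEcb
  have hm := fun (i j : Fin 2) => hCM E hEcb x hxcb i j
  have h2IE : ∀ z : ℂ, ‖2*I*E*z‖ = 2*‖E‖*‖z‖ := by
    intro z
    rw [norm_mul, norm_mul, norm_mul]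
    simp
  have key : ∀ (α : ℂ) (u v : ℂ), ‖α‖ ≤ Q → ‖u‖ ≤ 2*CM → ‖v‖ ≤ CM →
      ∀ s : ℂ, ‖s‖ = 2*‖E‖*‖v‖ → ‖α * u + s‖ ≤ Q*(2*CM) + 2*(‖E₀‖+1)*CM := by
    intro α u v hα hu hv s hs
    calc ‖α * u + s‖ ≤ ‖α * u‖ + ‖s‖ := norm_add_le _ _
      _ = ‖α‖*‖u‖ + 2*‖E‖*‖v‖ := by rw [norm_mul, hs]
      _ ≤ Q*(2*CM) + 2*(‖E₀‖+1)*CM := by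
          have h0 : 0 ≤ ‖E‖ := norm_nonneg _
          have h1 : 0 ≤ ‖u‖ := norm_nonneg _
          have h2 : 0 ≤ ‖v‖ := norm_nonneg _
          have h3 : 0 ≤ ‖α‖ := norm_nonneg _
          nlinarith
  refine ⟨?_, ?_, ?_, ?_⟩
  · have h1 : q x * Φ E (x+Ω) x 1 0 - p x * Φ E (x+Ω) x 0 1
        = q x * Φ E (x+Ω) x 1 0 + (-(p x)) * Φ E (x+Ω) x 0 1 := by ring
    rw [h1]
    calc ‖q x * Φ E (x+Ω) x 1 0 + (-(p x)) * Φ E (x+Ω) x 0 1‖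
        ≤ ‖q x * Φ E (x+Ω) x 1 0‖ + ‖(-(p x)) * Φ E (x+Ω) x 0 1‖ := norm_add_le _ _
      _ = ‖q x‖*‖Φ E (x+Ω) x 1 0‖ + ‖p x‖*‖Φ E (x+Ω) x 0 1‖ := by
          rw [norm_mul, norm_mul, norm_neg]
      _ ≤ Q*(2*CM) + 2*(‖E₀‖+1)*CM := by
          have h5 : ‖q x‖*‖Φ E (x+Ω) x 1 0‖ ≤ Q*CM :=
            mul_le_mul hqb (hm 1 0) (norm_nonneg _) hQ0
          have h6 : ‖p x‖*‖Φ E (x+Ω) x 0 1‖ ≤ Q*CM :=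
            mul_le_mul hpb (hm 0 1) (norm_nonneg _) hQ0
          have h7 : 0 ≤ (‖E₀‖+1)*CM := by positivity
          linarith
  · have h1 : q x * (Φ E (x+Ω) x 1 1 - Φ E (x+Ω) x 0 0) - 2*I*E*Φ E (x+Ω) x 0 1
        = q x * (Φ E (x+Ω) x 1 1 - Φ E (x+Ω) x 0 0) + (-(2*I*E*Φ E (x+Ω) x 0 1)) := by ring
    rw [h1]
    refine key (q x) _ (Φ E (x+Ω) x 0 1) hqb ?_ (hm 0 1) _ (by rw [norm_neg]; exact h2IE _)
    calc ‖Φ E (x+Ω) x 1 1 - Φ E (x+Ω) x 0 0‖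
        ≤ ‖Φ E (x+Ω) x 1 1‖ + ‖Φ E (x+Ω) x 0 0‖ := norm_sub_le _ _
      _ ≤ 2*CM := by have := hm 1 1; have := hm 0 0; linarith
  · refine key (p x) _ (Φ E (x+Ω) x 1 0) hpb ?_ (hm 1 0) _ (h2IE _)
    calc ‖Φ E (x+Ω) x 0 0 - Φ E (x+Ω) x 1 1‖
        ≤ ‖Φ E (x+Ω) x 0 0‖ + ‖Φ E (x+Ω) x 1 1‖ := norm_sub_le _ _
      _ ≤ 2*CM := by have := hm 1 1; have := hm 0 0; linarith
  · have h1 : p x * Φ E (x+Ω) x 0 1 - q x * Φ E (x+Ω) x 1 0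
        = p x * Φ E (x+Ω) x 0 1 + (-(q x)) * Φ E (x+Ω) x 1 0 := by ring
    rw [h1]
    calc ‖p x * Φ E (x+Ω) x 0 1 + (-(q x)) * Φ E (x+Ω) x 1 0‖
        ≤ ‖p x * Φ E (x+Ω) x 0 1‖ + ‖(-(q x)) * Φ E (x+Ω) x 1 0‖ := norm_add_le _ _
      _ = ‖p x‖*‖Φ E (x+Ω) x 0 1‖ + ‖q x‖*‖Φ E (x+Ω) x 1 0‖ := by
          rw [norm_mul, norm_mul, norm_neg]
      _ ≤ Q*(2*CM) + 2*(‖E₀‖+1)*CM := by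
          have h5 : ‖q x‖*‖Φ E (x+Ω) x 1 0‖ ≤ Q*CM :=
            mul_le_mul hqb (hm 1 0) (norm_nonneg _) hQ0
          have h6 : ‖p x‖*‖Φ E (x+Ω) x 0 1‖ ≤ Q*CM :=
            mul_le_mul hpb (hm 0 1) (norm_nonneg _) hQ0
          have h7 : 0 ≤ (‖E₀‖+1)*CM := by positivity
          linarith

include hpper hqper

lemma hasDerivAt_cA_coef (k : ℕ) (x₀ : ℝ) :
    HasDerivAt (fun x => coefI E₀ (fun E => Φ E (x+Ω) x 0 0) k)
      (q x₀ * coefI E₀ (fun E => Φ E (x₀+Ω) x₀ 1 0) k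
        - p x₀ * coefI E₀ (fun E => Φ E (x₀+Ω) x₀ 0 1) k) x₀ := by
  obtain ⟨C, hC⟩ := dM_bound hp hq hΦ (E₀ := E₀) (Ω := Ω) x₀
  have hc := fun (y x : ℝ) (i j : Fin 2) => (phi_entry_differentiable hp hq hΦ x y i j).continuous
  have h := hasDerivAt_coefI_param E₀ (fun E x => Φ E (x+Ω) x 0 0)
    (fun E x => q x * Φ E (x+Ω) x 1 0 - p x * Φ E (x+Ω) x 0 1) k x₀
    (fun E x => hasDerivAt_ma hp hq hΦ hpper hqper E x)
    (fun x => hc (x+Ω) x 0 0)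
    (((continuous_const.mul (hc (x₀+Ω) x₀ 1 0))).sub
      ((continuous_const.mul (hc (x₀+Ω) x₀ 0 1))))
    C (fun E hE x hx => (hC E hE x hx).1)
  convert h using 1
  have e1 : (fun E => q x₀ * Φ E (x₀+Ω) x₀ 1 0 - p x₀ * Φ E (x₀+Ω) x₀ 0 1)
      = fun E => (q x₀) * Φ E (x₀+Ω) x₀ 1 0 + (-(p x₀)) * Φ E (x₀+Ω) x₀ 0 1 :=
    funext fun E => by ring
  rw [e1, coefI_add E₀ (fun E => (q x₀) * Φ E (x₀+Ω) x₀ 1 0) (fun E => (-(p x₀)) * Φ E (x₀+Ω) x₀ 0 1) (continuous_const.mul (hc (x₀+Ω) x₀ 1 0))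
      (continuous_const.mul (hc (x₀+Ω) x₀ 0 1)) k,
    coefI_const_mul, coefI_const_mul]
  ring

lemma hasDerivAt_cD_coef (k : ℕ) (x₀ : ℝ) :
    HasDerivAt (fun x => coefI E₀ (fun E => Φ E (x+Ω) x 1 1) k)
      (p x₀ * coefI E₀ (fun E => Φ E (x₀+Ω) x₀ 0 1) k
        - q x₀ * coefI E₀ (fun E => Φ E (x₀+Ω) x₀ 1 0) k) x₀ := by
  obtain ⟨C, hC⟩ := dM_bound hp hq hΦ (E₀ := E₀) (Ω := Ω) x₀
  have hc := fun (y x : ℝ) (i j : Fin 2) => (phi_entry_differentiable hp hq hΦ x y i j).continuous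
  have h := hasDerivAt_coefI_param E₀ (fun E x => Φ E (x+Ω) x 1 1)
    (fun E x => p x * Φ E (x+Ω) x 0 1 - q x * Φ E (x+Ω) x 1 0) k x₀
    (fun E x => hasDerivAt_md hp hq hΦ hpper hqper E x)
    (fun x => hc (x+Ω) x 1 1)
    (((continuous_const.mul (hc (x₀+Ω) x₀ 0 1))).sub
      ((continuous_const.mul (hc (x₀+Ω) x₀ 1 0))))
    C (fun E hE x hx => (hC E hE x hx).2.2.2
    )
  convert h using 1
  have e1 : (fun E => p x₀ * Φ E (x₀+Ω) x₀ 0 1 - q x₀ * Φ E (x₀+Ω) x₀ 1 0)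
      = fun E => (p x₀) * Φ E (x₀+Ω) x₀ 0 1 + (-(q x₀)) * Φ E (x₀+Ω) x₀ 1 0 :=
    funext fun E => by ring
  rw [e1, coefI_add E₀ (fun E => (p x₀) * Φ E (x₀+Ω) x₀ 0 1) (fun E => (-(q x₀)) * Φ E (x₀+Ω) x₀ 1 0) (continuous_const.mul (hc (x₀+Ω) x₀ 0 1))
      (continuous_const.mul (hc (x₀+Ω) x₀ 1 0)) k,
    coefI_const_mul, coefI_const_mul]
  ring

lemma hasDerivAt_cG_coef (k : ℕ) (x₀ : ℝ) :
    HasDerivAt (fun x => coefI E₀ (fun E => Φ E (x+Ω) x 0 1) k)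
      (q x₀ * (coefI E₀ (fun E => Φ E (x₀+Ω) x₀ 1 1) k
          - coefI E₀ (fun E => Φ E (x₀+Ω) x₀ 0 0) k)
        - 2*I*(E₀ * coefI E₀ (fun E => Φ E (x₀+Ω) x₀ 0 1) k
          + preC (fun k' => coefI E₀ (fun E => Φ E (x₀+Ω) x₀ 0 1) k') k)) x₀ := by
  obtain ⟨C, hC⟩ := dM_bound hp hq hΦ (E₀ := E₀) (Ω := Ω) x₀
  have hc := fun (y x : ℝ) (i j : Fin 2) => (phi_entry_differentiable hp hq hΦ x y i j).continuous
  have hdg : Differentiable ℂ (fun E => Φ E (x₀+Ω) x₀ 0 1) :=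
    phi_entry_differentiable hp hq hΦ x₀ (x₀+Ω) 0 1
  have h := hasDerivAt_coefI_param E₀ (fun E x => Φ E (x+Ω) x 0 1)
    (fun E x => q x * (Φ E (x+Ω) x 1 1 - Φ E (x+Ω) x 0 0) - 2*I*E*Φ E (x+Ω) x 0 1) k x₀
    (fun E x => hasDerivAt_mg hp hq hΦ hpper hqper E x)
    (fun x => hc (x+Ω) x 0 1)
    ((continuous_const.mul ((hc (x₀+Ω) x₀ 1 1).sub (hc (x₀+Ω) x₀ 0 0))).sub
      (((continuous_const.mul continuous_id).mul (hc (x₀+Ω) x₀ 0 1))))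
    C (fun E hE x hx => (hC E hE x hx).2.1)
  convert h using 1
  have e1 : (fun E => q x₀ * (Φ E (x₀+Ω) x₀ 1 1 - Φ E (x₀+Ω) x₀ 0 0)
        - 2*I*E*Φ E (x₀+Ω) x₀ 0 1)
      = fun E => (q x₀) * Φ E (x₀+Ω) x₀ 1 1 + ((-(q x₀)) * Φ E (x₀+Ω) x₀ 0 0
          + (-(2*I)) * (E * Φ E (x₀+Ω) x₀ 0 1)) :=
    funext fun E => by ring
  have c1 : Continuous fun E => (q x₀) * Φ E (x₀+Ω) x₀ 1 1 :=
    continuous_const.mul (hc (x₀+Ω) x₀ 1 1)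
  have c2 : Continuous fun E => (-(q x₀)) * Φ E (x₀+Ω) x₀ 0 0 :=
    continuous_const.mul (hc (x₀+Ω) x₀ 0 0)
  have c3 : Continuous fun E => (-(2*I)) * (E * Φ E (x₀+Ω) x₀ 0 1) :=
    continuous_const.mul (continuous_id.mul (hc (x₀+Ω) x₀ 0 1))
  rw [e1, coefI_add E₀ _ (fun E => (-(q x₀)) * Φ E (x₀+Ω) x₀ 0 0 + (-(2*I)) * (E * Φ E (x₀+Ω) x₀ 0 1)) c1 (c2.add c3) k, coefI_add E₀ _ _ c2 c3 k,
    coefI_const_mul, coefI_const_mul, coefI_const_mul]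
  cases k with
  | zero =>
    rw [coefI_id0 E₀ _ hdg]
    simp only [preC]
    ring
  | succ k =>
    rw [coefI_idsucc E₀ _ hdg]
    simp only [preC]
    ring

lemma hasDerivAt_cH_coef (k : ℕ) (x₀ : ℝ) :
    HasDerivAt (fun x => coefI E₀ (fun E => Φ E (x+Ω) x 1 0) k)
      (p x₀ * (coefI E₀ (fun E => Φ E (x₀+Ω) x₀ 0 0) k
          - coefI E₀ (fun E => Φ E (x₀+Ω) x₀ 1 1) k)
        + 2*I*(E₀ * coefI E₀ (fun E => Φ E (x₀+Ω) x₀ 1 0) k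
          + preC (fun k' => coefI E₀ (fun E => Φ E (x₀+Ω) x₀ 1 0) k') k)) x₀ := by
  obtain ⟨C, hC⟩ := dM_bound hp hq hΦ (E₀ := E₀) (Ω := Ω) x₀
  have hc := fun (y x : ℝ) (i j : Fin 2) => (phi_entry_differentiable hp hq hΦ x y i j).continuous
  have hdh : Differentiable ℂ (fun E => Φ E (x₀+Ω) x₀ 1 0) :=
    phi_entry_differentiable hp hq hΦ x₀ (x₀+Ω) 1 0
  have h := hasDerivAt_coefI_param E₀ (fun E x => Φ E (x+Ω) x 1 0)
    (fun E x => p x * (Φ E (x+Ω) x 0 0 - Φ E (x+Ω) x 1 1) + 2*I*E*Φ E (x+Ω) x 1 0) k x₀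
    (fun E x => hasDerivAt_mh hp hq hΦ hpper hqper E x)
    (fun x => hc (x+Ω) x 1 0)
    ((continuous_const.mul ((hc (x₀+Ω) x₀ 0 0).sub (hc (x₀+Ω) x₀ 1 1))).add
      (((continuous_const.mul continuous_id).mul (hc (x₀+Ω) x₀ 1 0))))
    C (fun E hE x hx => (hC E hE x hx).2.2.1)
  convert h using 1
  have e1 : (fun E => p x₀ * (Φ E (x₀+Ω) x₀ 0 0 - Φ E (x₀+Ω) x₀ 1 1)
        + 2*I*E*Φ E (x₀+Ω) x₀ 1 0)
      = fun E => (p x₀) * Φ E (x₀+Ω) x₀ 0 0 + ((-(p x₀)) * Φ E (x₀+Ω) x₀ 1 1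
          + (2*I) * (E * Φ E (x₀+Ω) x₀ 1 0)) :=
    funext fun E => by ring
  have c1 : Continuous fun E => (p x₀) * Φ E (x₀+Ω) x₀ 0 0 :=
    continuous_const.mul (hc (x₀+Ω) x₀ 0 0)
  have c2 : Continuous fun E => (-(p x₀)) * Φ E (x₀+Ω) x₀ 1 1 :=
    continuous_const.mul (hc (x₀+Ω) x₀ 1 1)
  have c3 : Continuous fun E => ((2*I)) * (E * Φ E (x₀+Ω) x₀ 1 0) :=
    continuous_const.mul (continuous_id.mul (hc (x₀+Ω) x₀ 1 0))
  rw [e1, coefI_add E₀ _ (fun E => (-(p x₀)) * Φ E (x₀+Ω) x₀ 1 1 + (2*I) * (E * Φ E (x₀+Ω) x₀ 1 0)) c1 (c2.add c3) k, coefI_add E₀ _ _ c2 c3 k,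
    coefI_const_mul, coefI_const_mul, coefI_const_mul]
  cases k with
  | zero =>
    rw [coefI_id0 E₀ _ hdh]
    simp only [preC]
    ring
  | succ k =>
    rw [coefI_idsucc E₀ _ hdh]
    simp only [preC]
    ring

end CoefODE2

section Vanish

variable {p q : ℝ → ℂ} {Φ : ℂ → ℝ → ℝ → Matrix (Fin 2) (Fin 2) ℂ}
  (hp : Continuous p) (hq : Continuous q)
  (hΦ : IsFundamentalMatrix p q Φ)
  {Ω : ℝ} (hpper : ∀ x, p (x + Ω) = p x) (hqper : ∀ x, q (x + Ω) = q x)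
  (E₀ : ℂ)

include hp hq hΦ hpper hqper

lemma coef_vanish (xbar : ℝ) (hq0 : q xbar ≠ 0) (n : ℕ)
    (hg0 : ∀ x : ℝ, ∀ k < n, coefI E₀ (fun E => Φ E (x+Ω) x 0 1) k = 0) :
    ∀ k < n, ∀ x : ℝ,
      coefI E₀ (fun E => Φ E (x+Ω) x 0 0) k - coefI E₀ (fun E => Φ E (x+Ω) x 1 1) k = 0 ∧
      coefI E₀ (fun E => Φ E (x+Ω) x 1 0) k = 0 := by
  intro k
  induction k using Nat.strong_induction_on with
  | _ k ih =>
  intro hk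
  have hGzero : (fun x : ℝ => coefI E₀ (fun E => Φ E (x+Ω) x 0 1) k) = fun _ => (0:ℂ) :=
    funext fun x => hg0 x k hk
  have hGpre : ∀ x : ℝ, preC (fun k' => coefI E₀ (fun E => Φ E (x+Ω) x 0 1) k') k = 0 := by
    intro x
    cases k with
    | zero => rfl
    | succ k' => exact hg0 x k' (lt_trans (Nat.lt_succ_self k') hk)
  have hHpre : ∀ x : ℝ, preC (fun k' => coefI E₀ (fun E => Φ E (x+Ω) x 1 0) k') k = 0 := by
    intro x
    cases k with
    | zero => rfl
    | succ k' => exact ((ih k' (Nat.lt_succ_self k') (lt_trans (Nat.lt_succ_self k') hk)) x).2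
  -- (i) q x * (cD - cA) = 0 for all x
  have hqX : ∀ x : ℝ, q x * (coefI E₀ (fun E => Φ E (x+Ω) x 1 1) k
      - coefI E₀ (fun E => Φ E (x+Ω) x 0 0) k) = 0 := by
    intro x
    have h1 := hasDerivAt_cG_coef hp hq hΦ hpper hqper E₀ k x
    rw [hGzero] at h1
    have h2 := h1.unique (hasDerivAt_const x (0:ℂ))
    rw [hg0 x k hk, hGpre x] at h2
    linear_combination h2
  -- X := cA - cD
  set X : ℝ → ℂ := fun x => coefI E₀ (fun E => Φ E (x+Ω) x 0 0) k
    - coefI E₀ (fun E => Φ E (x+Ω) x 1 1) k with hX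
  have hXlocal : ∀ x : ℝ, q x ≠ 0 → X x = 0 := by
    intro x hx
    have h1 := hqX x
    rcases mul_eq_zero.mp h1 with h | h
    · exact absurd h hx
    · rw [hX]
      simp only
      linear_combination -h
  have hXder : ∀ x : ℝ, HasDerivAt X
      (2*(q x * coefI E₀ (fun E => Φ E (x+Ω) x 1 0) k)) x := by
    intro x
    have h := (hasDerivAt_cA_coef hp hq hΦ hpper hqper E₀ k x).sub
      (hasDerivAt_cD_coef hp hq hΦ hpper hqper E₀ k x)
    refine h.congr_deriv ?_
    rw [hg0 x k hk]
    ring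
  -- cH vanishes where q ≠ 0
  have hHlocal : ∀ x : ℝ, q x ≠ 0 → coefI E₀ (fun E => Φ E (x+Ω) x 1 0) k = 0 := by
    intro v hv
    have hopen : IsOpen {x : ℝ | q x ≠ 0} := isOpen_compl_singleton.preimage hq
    have hev : X =ᶠ[nhds v] (fun _ => (0:ℂ)) := by
      filter_upwards [hopen.mem_nhds hv] with x hx
      exact hXlocal x hx
    have h0 : HasDerivAt X 0 v := (hasDerivAt_const v (0:ℂ)).congr_of_eventuallyEq hev
    have h1 := (hXder v).unique h0
    have h2 : q v * coefI E₀ (fun E => Φ E (v+Ω) v 1 0) k = 0 := by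
      linear_combination h1 / 2
    rcases mul_eq_zero.mp h2 with h | h
    · exact absurd h hv
    · exact h
  -- pair ODE and global vanishing
  set Y : ℝ → ℂ × ℂ := fun x => (X x, coefI E₀ (fun E => Φ E (x+Ω) x 1 0) k) with hY
  have hYder : ∀ x : ℝ, HasDerivAt Y
      ((2*(q x * (Y x).2), p x * (Y x).1 + 2*I*E₀*(Y x).2) : ℂ × ℂ) x := by
    intro x
    have h := (hXder x).prodMk (hasDerivAt_cH_coef hp hq hΦ hpper hqper E₀ k x)
    refine h.congr_deriv ?_
    simp only [hY, hX, Prod.mk.injEq]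
    rw [hHpre x]
    exact ⟨trivial, by ring⟩
  have hYbound : ∀ x : ℝ, ‖((2*(q x * (Y x).2), p x * (Y x).1 + 2*I*E₀*(Y x).2) : ℂ × ℂ)‖
      ≤ (‖(0:ℂ)‖ + ‖2*q x‖ + ‖p x‖ + ‖2*I*E₀‖) * ‖Y x‖ := by
    intro x
    have h := pair_lin_bound 0 (2*q x) (p x) (2*I*E₀) ((Y x).1) ((Y x).2)
    have he : ((0*(Y x).1 + (2*q x)*(Y x).2, p x*(Y x).1 + (2*I*E₀)*(Y x).2) : ℂ × ℂ)
        = ((2*(q x * (Y x).2), p x * (Y x).1 + 2*I*E₀*(Y x).2) : ℂ × ℂ) := by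
      simp only [Prod.mk.injEq]
      exact ⟨by ring, trivial⟩
    rw [he] at h
    exact h.trans (le_of_eq rfl)
  have hY0 : Y xbar = 0 := by
    rw [hY]
    simp only [Prod.mk_eq_zero]
    exact ⟨hXlocal xbar hq0, hHlocal xbar hq0⟩
  have hg : Continuous fun x : ℝ => ‖(0:ℂ)‖ + ‖2*q x‖ + ‖p x‖ + ‖2*I*E₀‖ := by
    apply Continuous.add
    apply Continuous.add
    apply Continuous.add
    · exact continuous_const
    · exact (continuous_const.mul hq).norm
    · exact hp.norm
    · exact continuous_const
  have key := ode_zero Y _ hYder _ hg hYbound xbar hY0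
  intro x
  have h := key x
  constructor
  · have := congrArg Prod.fst h
    simpa [hY, hX] using this
  · have := congrArg Prod.snd h
    simpa [hY] using this

end Vanish

end AKNS15

open AKNS15 in
/-- For `p, q` of class `C²`, `Ω`-periodic, with `q` not identically zero,
the order `s(E₀)` of the zero of `Δ(E)² - 4` at any `E₀` is at least twice the infimum over
`x` of the order `δ(E₀,x)` of the zero of `E ↦ g(E,x)` at `E₀` (here `Δ` is the Floquet
discriminant and `g(E,x)` the upper-right entry of the monodromy matrix based at `x`). -/
theorem discriminant_order_ge_twice_immovable_dirichlet
    (p q : ℝ → ℂ) (Ω : ℝ) (hΩ : 0 < Ω)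
    (hp : ContDiff ℝ 2 p) (hq : ContDiff ℝ 2 q)
    (hpper : ∀ x, p (x + Ω) = p x) (hqper : ∀ x, q (x + Ω) = q x)
    (xbar : ℝ) (hq0 : q xbar ≠ 0)
    (Φ : ℂ → ℝ → ℝ → Matrix (Fin 2) (Fin 2) ℂ)
    (hΦ : IsFundamentalMatrix p q Φ)
    (E₀ : ℂ)
    (hΔa : AnalyticAt ℂ (fun E => (Matrix.trace (Φ E Ω 0)) ^ 2 - 4) E₀)
    (hga : ∀ x : ℝ, AnalyticAt ℂ (fun E => Φ E (x + Ω) x 0 1) E₀) :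
    2 * (⨅ x : ℝ, analyticOrderAt (fun E => Φ E (x + Ω) x 0 1) E₀) ≤ analyticOrderAt (fun E => (Matrix.trace (Φ E Ω 0)) ^ 2 - 4) E₀ := by
  have hpc : Continuous p := hp.continuous
  have hqc : Continuous q := hq.continuous
  have hdg : ∀ x : ℝ, Differentiable ℂ (fun E => Φ E (x + Ω) x 0 1) :=
    fun x => phi_entry_differentiable hpc hqc hΦ x (x+Ω) 0 1
  have hd00 : Differentiable ℂ (fun E => Φ E Ω 0 0 0) :=
    phi_entry_differentiable hpc hqc hΦ 0 Ω 0 0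
  have hd01 : Differentiable ℂ (fun E => Φ E Ω 0 0 1) :=
    phi_entry_differentiable hpc hqc hΦ 0 Ω 0 1
  have hd10 : Differentiable ℂ (fun E => Φ E Ω 0 1 0) :=
    phi_entry_differentiable hpc hqc hΦ 0 Ω 1 0
  have hd11 : Differentiable ℂ (fun E => Φ E Ω 0 1 1) :=
    phi_entry_differentiable hpc hqc hΦ 0 Ω 1 1
  have hdX : Differentiable ℂ (fun E => Φ E Ω 0 0 0 - Φ E Ω 0 1 1) := hd00.sub hd11
  have e00 : (fun E => Φ E ((0:ℝ)+Ω) 0 0 0) = (fun E => Φ E Ω 0 0 0) :=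
    funext fun E => by rw [zero_add]
  have e01 : (fun E => Φ E ((0:ℝ)+Ω) 0 0 1) = (fun E => Φ E Ω 0 0 1) :=
    funext fun E => by rw [zero_add]
  have e10 : (fun E => Φ E ((0:ℝ)+Ω) 0 1 0) = (fun E => Φ E Ω 0 1 0) :=
    funext fun E => by rw [zero_add]
  have e11 : (fun E => Φ E ((0:ℝ)+Ω) 0 1 1) = (fun E => Φ E Ω 0 1 1) :=
    funext fun E => by rw [zero_add]
  have hdet : ∀ E : ℂ, Φ E Ω 0 0 0 * Φ E Ω 0 1 1 - Φ E Ω 0 0 1 * Φ E Ω 0 1 0 = 1 :=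
    fun E => det_phi hpc hqc hΦ E 0 Ω
  have htr : ∀ E : ℂ, Matrix.trace (Φ E Ω 0) = Φ E Ω 0 0 0 + Φ E Ω 0 1 1 :=
    fun E => Matrix.trace_fin_two _
  have hΔdiff : Differentiable ℂ (fun E => (Matrix.trace (Φ E Ω 0))^2 - 4) := by
    have h1 : (fun E => (Matrix.trace (Φ E Ω 0))^2 - 4)
        = fun E => (Φ E Ω 0 0 0 + Φ E Ω 0 1 1)^2 - 4 := funext fun E => by rw [htr E]
    rw [h1]
    exact ((hd00.add hd11).pow 2).sub_const 4
  have main : ∀ n : ℕ, (n : ℕ∞) ≤ (⨅ x : ℝ, analyticOrderAt (fun E => Φ E (x + Ω) x 0 1) E₀) →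
      ((2*n : ℕ) : ℕ∞) ≤ analyticOrderAt (fun E => (Matrix.trace (Φ E Ω 0)) ^ 2 - 4) E₀ := by
    intro n hn
    have hg0 : ∀ x : ℝ, ∀ k, k < n → coefI E₀ (fun E => Φ E (x+Ω) x 0 1) k = 0 := by
      intro x k hk
      apply coefI_eq_zero_of_le_order E₀ _ (hdg x) hk
      have h1 : (⨅ x : ℝ, analyticOrderAt (fun E => Φ E (x + Ω) x 0 1) E₀) ≤ analyticOrderAt (fun E => Φ E (x + Ω) x 0 1) E₀ := iInf_le _ x
      exact le_trans hn h1
    have hvan := coef_vanish hpc hqc hΦ hpper hqper E₀ xbar hq0 n hg0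
    -- coefficient vanishing at x = 0
    have hcX : ∀ k, k < n → coefI E₀ (fun E => Φ E Ω 0 0 0 - Φ E Ω 0 1 1) k = 0 := by
      intro k hk
      have h1 := (hvan k hk 0).1
      rw [e00, e11] at h1
      rw [coefI_sub E₀ _ _ hd00.continuous hd11.continuous k]
      exact h1
    have hcG : ∀ k, k < n → coefI E₀ (fun E => Φ E Ω 0 0 1) k = 0 := by
      intro k hk
      have h1 := hg0 0 k hk
      rwa [e01] at h1
    have hcH : ∀ k, k < n → coefI E₀ (fun E => Φ E Ω 0 1 0) k = 0 := by
      intro k hk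
      have h1 := (hvan k hk 0).2
      rwa [e10] at h1
    -- orders
    have hordX := le_order_of_coefI_eq_zero E₀ _ hdX hcX
    have hordG := le_order_of_coefI_eq_zero E₀ _ hd01 hcG
    have hordH := le_order_of_coefI_eq_zero E₀ _ hd10 hcH
    obtain ⟨u, hu_an, hu⟩ := rep_of_le_order E₀ (hdX.analyticAt E₀) hordX
    obtain ⟨v, hv_an, hv⟩ := rep_of_le_order E₀ (hd01.analyticAt E₀) hordG
    obtain ⟨w, hw_an, hw⟩ := rep_of_le_order E₀ (hd10.analyticAt E₀) hordH
    have hrepf : ∀ᶠ z in nhds E₀, (Matrix.trace (Φ z Ω 0))^2 - 4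
        = (z - E₀)^(2*n) * ((u z)^2 + 4*(v z * w z)) := by
      filter_upwards [hu, hv, hw] with z h1 h2 h3
      have h1' : Φ z Ω 0 0 0 - Φ z Ω 0 1 1 = (z - E₀)^n * u z := h1
      have h2' : Φ z Ω 0 0 1 = (z - E₀)^n * v z := h2
      have h3' : Φ z Ω 0 1 0 = (z - E₀)^n * w z := h3
      have hid : (Matrix.trace (Φ z Ω 0))^2 - 4
          = (Φ z Ω 0 0 0 - Φ z Ω 0 1 1)^2 + 4*(Φ z Ω 0 0 1 * Φ z Ω 0 1 0) := by
        rw [htr z]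
        linear_combination 4 * hdet z
      rw [hid, h1', h2', h3']
      ring
    have hG_an : AnalyticAt ℂ (fun z => (u z)^2 + 4*(v z * w z)) E₀ :=
      (hu_an.pow 2).add (analyticAt_const.mul (hv_an.mul hw_an))
    have hfinal := le_order_of_rep E₀ (hΔdiff.analyticAt E₀) hG_an hrepf
    exact hfinal
  rcases eq_or_ne (⨅ x : ℝ, analyticOrderAt (fun E => Φ E (x + Ω) x 0 1) E₀) ⊤ with htop | hne
  · have hall : ∀ n : ℕ, ((n:ℕ∞)) ≤ analyticOrderAt (fun E => (Matrix.trace (Φ E Ω 0)) ^ 2 - 4) E₀ := by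
      intro n
      refine le_trans ?_ (main n (by rw [htop]; exact le_top))
      have : n ≤ 2*n := by omega
      exact_mod_cast Nat.cast_le.mpr this
    have hΔtop : analyticOrderAt (fun E => (Matrix.trace (Φ E Ω 0)) ^ 2 - 4) E₀ = ⊤ := by
      by_contra hne2
      obtain ⟨N, hN0⟩ := WithTop.ne_top_iff_exists.mp hne2
      have hN : (N : ℕ∞) = analyticOrderAt (fun E => (Matrix.trace (Φ E Ω 0)) ^ 2 - 4) E₀ := by exact_mod_cast hN0
      have h1 := hall (N+1)
      rw [← hN] at h1
      have h2 : N + 1 ≤ N := by exact_mod_cast h1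
      omega
    rw [htop, hΔtop]
    exact le_top
  · obtain ⟨N, hN0⟩ := WithTop.ne_top_iff_exists.mp hne
    have hN : (N : ℕ∞) = ⨅ x : ℝ, analyticOrderAt (fun E => Φ E (x + Ω) x 0 1) E₀ := by exact_mod_cast hN0
    have h1 := main N (le_of_eq hN)
    rw [← hN]
    have h2 : (2 : ℕ∞) * (N : ℕ∞) = ((2*N : ℕ) : ℕ∞) := by push_cast; ring
    rw [h2]
    exact h1
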